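/- arXiv:2111.08036 — 2 statements merged into one kernel-verified Lean document; each statement's English description precedes it below -/
import Mathlib

section
/- Every homogeneous element of degree 3 of the subgroup 𝓘 lies in 𝓛, and conversely 𝓛 ⊆ 𝓘; in other words, the set of homogeneous degree-3 elements of 𝓘 coincides with 𝓛. -/
set_option synthInstance.maxHeartbeats 1000000
set_option maxHeartbeats 1000000

open MvPolynomial QuaternionGroup

/-- The quaternion group `Q₈ = {1, −1, i, −i, j, −j, k, −k}` of order `8`.
Concretely, `1 = a 0`, `−1 = a 2`, `i = a 1`, `−i = a 3`, `j = xa 0`, `−j = xa 2`,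
`k = xa 3`, `−k = xa 1`. -/
abbrev Q8 : Type := QuaternionGroup 2

/-- The polynomial ring `R = ℤ[u_g : g ∈ Q₈]`. -/
abbrev R8 : Type := MvPolynomial Q8 ℤ

/-- The action of `g ∈ Q₈` on `R` by the `ℤ`-algebra automorphism permuting the
variables by left translation: `g • u_h = u_{g h}`. -/
noncomputable def act (g : Q8) : R8 →ₐ[ℤ] R8 :=
  rename (fun h : Q8 => g * h)

noncomputable def eV : R8 := X (a 0)
noncomputable def e'V : R8 := X (a 2)
noncomputable def xV : R8 := X (a 1)
noncomputable def x'V : R8 := X (a 3)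
noncomputable def yV : R8 := X (xa 0)
noncomputable def y'V : R8 := X (xa 2)
noncomputable def zV : R8 := X (xa 3)
noncomputable def z'V : R8 := X (xa 1)

/-- The polynomial `w = xyz + x′y′z′ + e′zy′ + ez′y + z′e′x + zex′ + yx′e′ + y′xe`. -/
noncomputable def w : R8 :=
  xV * yV * zV + x'V * y'V * z'V + e'V * zV * y'V + eV * z'V * yV
    + z'V * e'V * xV + zV * eV * x'V + yV * x'V * e'V + y'V * xV * eV


/-- The generators of the subgroup `𝓛`: the inductions `Ind^{Q₈}_{{±1}}(v·q)
= (v·q) + i·(v·q) + j·(v·q) + k·(v·q)`, where `v ∈ {e+e′, x+x′, y+y′, z+z′}` and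
`q` is a homogeneous polynomial of degree `2` fixed by the action of `−1`. -/
noncomputable def Lgens : Set R8 :=
  {r : R8 | ∃ v ∈ ({eV + e'V, xV + x'V, yV + y'V, zV + z'V} : Set R8),
      ∃ q : R8, q.IsHomogeneous 2 ∧ act (a 2) q = q ∧
        r = v * q + act (a 1) (v * q) + act (xa 0) (v * q) + act (xa 3) (v * q)}

/-- The additive subgroup `𝓛` of `R`. -/
noncomputable def Lgrp : AddSubgroup R8 := AddSubgroup.closure Lgens

/-- The `ℤ`-subalgebra `A ⊆ R` generated by `e+e′, x+x′, y+y′, z+z′`. -/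
noncomputable def Asub : Subalgebra ℤ R8 :=
  Algebra.adjoin ℤ ({eV + e'V, xV + x'V, yV + y'V, zV + z'V} : Set R8)

/-- The induction `Ind^{Q₈}_H(u) = Σ_g g·u` of `u ∈ R` from a subgroup `H ≤ Q₈` to
`Q₈`, the sum running over a set of representatives of the left cosets of `H` in `Q₈`
(for `H`-invariant `u` it is independent of the choice of representatives). -/
noncomputable def ind (H : Subgroup Q8) (u : R8) : R8 :=
  haveI : Fintype (Q8 ⧸ H) := Fintype.ofFinite _
  ∑ c : Q8 ⧸ H, act (Quotient.out c) u

/-- The additive subgroup `𝓘` of `R`, generated by the elements `Ind^{Q₈}_H(p·q)` where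
`H` ranges over all subgroups of `Q₈`, `p ∈ A⁺` is `H`-invariant and `q ∈ R` is
`H`-invariant. -/
noncomputable def Igrp : AddSubgroup R8 := AddSubgroup.closure
  {r : R8 | ∃ (H : Subgroup Q8) (p q : R8),
    p ∈ Asub ∧ MvPolynomial.constantCoeff p = 0 ∧
    (∀ h ∈ H, act h p = p) ∧ (∀ h ∈ H, act h q = q) ∧
    r = ind H (p * q)}


/-! ### Auxiliary infrastructure -/

open Finset

lemma act_act (g h : Q8) (u : R8) : act g (act h u) = act (g * h) u := by
  show rename _ (rename _ u) = rename _ u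
  rw [rename_rename]
  have : ((fun h' : Q8 => g * h') ∘ fun h' : Q8 => h * h') = (fun h' : Q8 => g * h * h') := by
    funext x; exact (mul_assoc g h x).symm
  rw [this]

lemma act_one (u : R8) : act (1 : Q8) u = u := by
  show rename _ u = u
  have : (fun h : Q8 => (1:Q8) * h) = id := by funext x; simp
  rw [this, rename_id, AlgHom.id_apply]

lemma act_a0 (u : R8) : act (a 0) u = u := act_one u

noncomputable def stab (u : R8) : Subgroup Q8 where
  carrier := {g | act g u = u}
  one_mem' := act_one u
  mul_mem' := by
    intro x y hx hy
    show act (x * y) u = u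
    rw [← act_act, hy, hx]
  inv_mem' := by
    intro x hx
    show act x⁻¹ u = u
    conv_lhs => rw [← hx]
    rw [act_act, inv_mul_cancel, act_one]

lemma mem_stab {u : R8} {g : Q8} : g ∈ stab u ↔ act g u = u := Iff.rfl

lemma stab_zpowers {u : R8} {g h : Q8} (hg : act g u = u) (hh : h ∈ Subgroup.zpowers g) :
    act h u = u :=
  (Subgroup.zpowers_le.2 (mem_stab.2 hg)) hh

lemma hc_act (n : ℕ) (g : Q8) (u : R8) :
    homogeneousComponent n (act g u) = act g (homogeneousComponent n u) := by
  have hinj : Function.Injective (fun h : Q8 => g * h) := fun x y hxy => by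
    simpa using hxy
  ext d
  obtain ⟨d', rfl⟩ : ∃ d', Finsupp.mapDomain (fun h : Q8 => g * h) d' = d := by
    refine ⟨Finsupp.mapDomain (fun h : Q8 => g⁻¹ * h) d, ?_⟩
    rw [← Finsupp.mapDomain_comp]
    have : ((fun h : Q8 => g * h) ∘ fun h : Q8 => g⁻¹ * h) = id := by
      funext x; simp
    rw [this, Finsupp.mapDomain_id]
  have hdeg : (Finsupp.mapDomain (fun h : Q8 => g * h) d').degree = d'.degree := by
    rw [Finsupp.degree_apply, Finsupp.degree_apply]
    rw [Finsupp.mapDomain_support_of_injective hinj]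
    rw [Finset.sum_image (fun x _ y _ h => hinj h)]
    refine Finset.sum_congr rfl fun x hx => ?_
    rw [Finsupp.mapDomain_apply hinj]
  show coeff _ (homogeneousComponent n (rename _ u)) = coeff _ (rename _ (homogeneousComponent n u))
  rw [coeff_homogeneousComponent, coeff_rename_mapDomain _ hinj,
    coeff_rename_mapDomain _ hinj, coeff_homogeneousComponent, hdeg]

lemma constantCoeff_act (g : Q8) (u : R8) : constantCoeff (act g u) = constantCoeff u :=
  constantCoeff_rename _ u

noncomputable def Ssum (u : R8) : R8 := ∑ g : Q8, act g u

noncomputable def T : R8 →ₗ[ℤ] R8 :=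
  (act (a 0)).toLinearMap + (act (a 1)).toLinearMap + (act (xa 0)).toLinearMap
    + (act (xa 3)).toLinearMap

lemma T_apply (u : R8) :
    T u = act (a 0) u + act (a 1) u + act (xa 0) u + act (xa 3) u := rfl

lemma card_smul_ind (H : Subgroup Q8) (u : R8) (hu : ∀ h ∈ H, act h u = u) :
    Nat.card H • ind H u = Ssum u := by
  letI instQ : Fintype (Q8 ⧸ H) := Fintype.ofFinite _
  letI instH : Fintype H := Fintype.ofFinite _
  have hind : ind H u = ∑ c : Q8 ⧸ H, act (Quotient.out c) u := rfl
  have hstep : ∀ c : Q8 ⧸ H, Nat.card H • act (Quotient.out c) u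
      = ∑ h : H, act (Quotient.out c * (h : Q8)) u := by
    intro c
    have : ∀ h : H, act (Quotient.out c * (h : Q8)) u = act (Quotient.out c) u := by
      intro h
      rw [← act_act, hu _ h.2]
    rw [Finset.sum_congr rfl (fun h _ => this h), Finset.sum_const, Finset.card_univ,
      Nat.card_eq_fintype_card]
  have hbij : Function.Bijective (fun p : (Q8 ⧸ H) × H => Quotient.out p.1 * (p.2 : Q8)) := by
    rw [Fintype.bijective_iff_injective_and_card]
    constructor
    · rintro ⟨c₁, h₁⟩ ⟨c₂, h₂⟩ hp
      simp only at hp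
      have hc : c₁ = c₂ := by
        have e1 : QuotientGroup.mk (Quotient.out c₁ * (h₁ : Q8)) = c₁ := by
          rw [QuotientGroup.mk_mul_of_mem _ h₁.2, QuotientGroup.out_eq']
        have e2 : QuotientGroup.mk (Quotient.out c₂ * (h₂ : Q8)) = c₂ := by
          rw [QuotientGroup.mk_mul_of_mem _ h₂.2, QuotientGroup.out_eq']
        rw [← e1, ← e2, hp]
      subst hc
      have : (h₁ : Q8) = (h₂ : Q8) := mul_left_cancel hp
      exact Prod.ext rfl (Subtype.ext this)
    · rw [Fintype.card_prod]
      have := Subgroup.card_eq_card_quotient_mul_card_subgroup H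
      simp only [Nat.card_eq_fintype_card] at this
      exact this.symm
  calc Nat.card H • ind H u
      = ∑ c : Q8 ⧸ H, Nat.card H • act (Quotient.out c) u := by
        rw [hind, Finset.smul_sum]
    _ = ∑ c : Q8 ⧸ H, ∑ h : H, act (Quotient.out c * (h : Q8)) u := by
        exact Finset.sum_congr rfl fun c _ => hstep c
    _ = ∑ p : (Q8 ⧸ H) × H, act (Quotient.out p.1 * (p.2 : Q8)) u := by
        exact (Fintype.sum_prod_type
          (f := fun p : (Q8 ⧸ H) × H => act (Quotient.out p.1 * (p.2 : Q8)) u)).symm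
    _ = ∑ g : Q8, act g u :=
        Fintype.sum_bijective _ hbij _ _ (fun p => rfl)

lemma Ssum_eq (u : R8) : Ssum u = T u + T (act (a 2) u) := by
  have huniv : (Finset.univ : Finset Q8) = {a 0, a 1, a 2, a 3, xa 0, xa 1, xa 2, xa 3} := by
    decide
  rw [Ssum, huniv]
  rw [Finset.sum_insert (by decide), Finset.sum_insert (by decide),
    Finset.sum_insert (by decide), Finset.sum_insert (by decide),
    Finset.sum_insert (by decide), Finset.sum_insert (by decide),
    Finset.sum_insert (by decide), Finset.sum_singleton]
  rw [T_apply, T_apply, act_act, act_act, act_act, act_act]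
  rw [show (a 0 : Q8) * a 2 = a 2 by decide, show (a 1 : Q8) * a 2 = a 3 by decide,
    show (xa 0 : Q8) * a 2 = xa 2 by decide, show (xa 3 : Q8) * a 2 = xa 1 by decide]
  ring

lemma smul_cancel {n : ℕ} (hn : n ≠ 0) {x y : R8} (h : n • x = n • y) : x = y := by
  have h' : (n : ℤ) • x = (n : ℤ) • y := by
    simpa using h
  exact smul_right_injective R8 (by exact_mod_cast hn) h'

lemma cardQ8 : Nat.card Q8 = 8 := by
  rw [Nat.card_eq_fintype_card, QuaternionGroup.card]

lemma order2 : ∀ g : Q8, g * g = 1 → g = 1 ∨ g = a 2 := by decide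

lemma order4elt : ∀ g : Q8, g ≠ a 0 → g ≠ a 2 →
    (g * g = a 2 ∧ (a 1 = g ∨ a 1 = g * g * g ∨ xa 0 = g ∨ xa 0 = g * g * g ∨
      xa 3 = g ∨ xa 3 = g * g * g)) := by decide

lemma Hcases (H : Subgroup Q8) :
    Nat.card H = 1 ∨
    (Nat.card H = 2 ∧ a 2 ∈ H) ∨
    (Nat.card H = 4 ∧ a 2 ∈ H ∧ (a 1 ∈ H ∨ xa 0 ∈ H ∨ xa 3 ∈ H)) ∨
    (Nat.card H = 8 ∧ ∀ g : Q8, g ∈ H) := by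
  have hdvd : Nat.card H ∣ 8 := by
    have := Subgroup.card_subgroup_dvd_card H
    rwa [cardQ8] at this
  have hpos : 0 < Nat.card H := Nat.card_pos
  have hsq : ∀ g ∈ H, g ^ Nat.card H = 1 := by
    intro g hg
    have h1 : (⟨g, hg⟩ : H) ^ Nat.card H = 1 := pow_card_eq_one'
    have h2 : (((⟨g, hg⟩ : H) ^ Nat.card H : H) : Q8) = g ^ Nat.card H := by
      push_cast
      rfl
    rw [← h2, h1]
    rfl
  have h8 : Nat.card H ≤ 8 := Nat.le_of_dvd (by norm_num) hdvd
  interval_cases h : Nat.card H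
  · left; rfl
  · right; left
    refine ⟨rfl, ?_⟩
    have hne : H ≠ ⊥ := by
      intro hbot
      rw [hbot, Subgroup.card_bot] at h
      exact absurd h (by norm_num)
    obtain ⟨g, hgH, hg1⟩ := (Subgroup.bot_or_exists_ne_one H).resolve_left hne
    have hgg : g * g = 1 := by
      have h2 := hsq g hgH
      rwa [pow_two] at h2
    rcases order2 g hgg with h1 | h2
    · exact absurd h1 hg1
    · rwa [← h2]
  · exact absurd hdvd (by decide)
  · right; right; left
    refine ⟨rfl, ?_⟩
    haveI : Fact (Nat.Prime 2) := ⟨by norm_num⟩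
    have hordz : orderOf (a 2 : Q8) = 2 :=
      orderOf_eq_prime (by decide) (by decide)
    have hcardz : Nat.card (Subgroup.zpowers (a 2 : Q8)) = 2 := by
      rw [Nat.card_zpowers, hordz]
    have hnotle : ¬ H ≤ Subgroup.zpowers (a 2 : Q8) := by
      intro hle
      have := Subgroup.card_dvd_of_le hle
      rw [h, hcardz] at this
      exact absurd this (by norm_num)
    obtain ⟨g, hgH, hgz⟩ : ∃ g ∈ H, g ∉ Subgroup.zpowers (a 2 : Q8) := by
      by_contra hc
      push_neg at hc
      exact hnotle hc
    have hg1 : g ≠ a 0 := by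
      intro hh
      exact hgz (hh ▸ (by rw [← QuaternionGroup.one_def]; exact Subgroup.one_mem _))
    have hg2 : g ≠ a 2 := fun hh => hgz (hh ▸ Subgroup.mem_zpowers _)
    obtain ⟨hgg, hdisj⟩ := order4elt g hg1 hg2
    have ha2 : (a 2 : Q8) ∈ H := hgg ▸ Subgroup.mul_mem H hgH hgH
    refine ⟨ha2, ?_⟩
    have hcube : g * g * g ∈ H := Subgroup.mul_mem H (Subgroup.mul_mem H hgH hgH) hgH
    rcases hdisj with h1 | h1 | h1 | h1 | h1 | h1
    · exact Or.inl (h1 ▸ hgH)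
    · exact Or.inl (h1 ▸ hcube)
    · exact Or.inr (Or.inl (h1 ▸ hgH))
    · exact Or.inr (Or.inl (h1 ▸ hcube))
    · exact Or.inr (Or.inr (h1 ▸ hgH))
    · exact Or.inr (Or.inr (h1 ▸ hcube))
  · exact absurd hdvd (by decide)
  · exact absurd hdvd (by decide)
  · exact absurd hdvd (by decide)
  · right; right; right
    refine ⟨rfl, ?_⟩
    have htop : H = ⊤ := Subgroup.eq_top_of_card_eq H (by rw [h, cardQ8])
    intro g
    rw [htop]
    trivial

/-! ### Homogeneous component lemmas -/

lemma hc_self {φ : R8} {n : ℕ} (h : φ.IsHomogeneous n) : homogeneousComponent n φ = φ := by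
  rw [homogeneousComponent_of_mem ((mem_homogeneousSubmodule n φ).2 h), if_pos rfl]

lemma hc_ne {φ : R8} {m n : ℕ} (h : φ.IsHomogeneous m) (hne : n ≠ m) :
    homogeneousComponent n φ = 0 := by
  rw [homogeneousComponent_of_mem ((mem_homogeneousSubmodule m φ).2 h), if_neg hne]

lemma cc_hc (p : R8) {n : ℕ} (hn : n ≠ 0) :
    constantCoeff (homogeneousComponent n p) = 0 := by
  rw [constantCoeff_eq]
  show coeff 0 _ = 0
  rw [coeff_homogeneousComponent, if_neg]
  rw [map_zero]
  exact fun h => hn h.symm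

lemma hc_mul_homog (i j n : ℕ) (p q : R8) :
    homogeneousComponent n (homogeneousComponent i p * homogeneousComponent j q) =
      if n = i + j then homogeneousComponent i p * homogeneousComponent j q else 0 :=
  homogeneousComponent_of_mem ((mem_homogeneousSubmodule _ _).2
    ((homogeneousComponent_isHomogeneous i p).mul (homogeneousComponent_isHomogeneous j q)))

lemma sum_hc_big (p : R8) (N : ℕ) (hN : p.totalDegree + 1 ≤ N) :
    ∑ i ∈ range N, homogeneousComponent i p = p := by
  rw [← Finset.sum_subset (Finset.range_subset_range.2 hN)
    (fun x _ hx => homogeneousComponent_eq_zero x p (by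
      simp only [Finset.mem_range, not_lt] at hx ⊢
      omega))]
  exact sum_homogeneousComponent p

lemma hc3_mul (p q : R8) :
    homogeneousComponent 3 (p * q) =
      ∑ i ∈ range 4, homogeneousComponent i p * homogeneousComponent (3 - i) q := by
  set N := max (p.totalDegree + 1) (q.totalDegree + 1) + 4 with hNdef
  have hN4 : 4 ≤ N := by omega
  have hp := sum_hc_big p N (by omega)
  have hq := sum_hc_big q N (by omega)
  calc homogeneousComponent 3 (p * q)
      = homogeneousComponent 3 ((∑ i ∈ range N, homogeneousComponent i p) *
          (∑ j ∈ range N, homogeneousComponent j q)) := by rw [hp, hq]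
    _ = ∑ i ∈ range N, ∑ j ∈ range N,
          homogeneousComponent 3 (homogeneousComponent i p * homogeneousComponent j q) := by
        rw [Finset.sum_mul_sum, map_sum]
        exact Finset.sum_congr rfl fun i _ => map_sum _ _ _
    _ = ∑ i ∈ range N, ∑ j ∈ range N,
          (if (3:ℕ) = i + j then homogeneousComponent i p * homogeneousComponent j q else 0) := by
        exact Finset.sum_congr rfl fun i _ => Finset.sum_congr rfl fun j _ => hc_mul_homog i j 3 p q
    _ = ∑ i ∈ range N,
          (if i < 4 then homogeneousComponent i p * homogeneousComponent (3 - i) q else 0) := by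
        refine Finset.sum_congr rfl fun i _ => ?_
        by_cases hi : i < 4
        · rw [if_pos hi]
          rw [Finset.sum_eq_single (3 - i)]
          · rw [if_pos (by omega)]
          · intro j _ hj
            rw [if_neg (by omega)]
          · intro hmem
            exact absurd (Finset.mem_range.2 (by omega)) hmem
        · rw [if_neg hi]
          exact Finset.sum_eq_zero fun j _ => if_neg (by omega)
    _ = ∑ i ∈ range 4, homogeneousComponent i p * homogeneousComponent (3 - i) q := by
        rw [← Finset.sum_subset (Finset.range_subset_range.2 hN4)
          (fun x _ hx => by rw [if_neg (by simpa using hx)])]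
        exact Finset.sum_congr rfl fun i hi => if_pos (Finset.mem_range.1 hi)

/-! ### The algebra `A` and the subgroup `𝓛` -/

noncomputable def gensSet : Set R8 := {eV + e'V, xV + x'V, yV + y'V, zV + z'V}

lemma act_X (g h : Q8) : act g (X h : R8) = X (g * h) := rename_X _ _

lemma mem_gensSet_iff {v : R8} :
    v ∈ gensSet ↔ v = eV + e'V ∨ v = xV + x'V ∨ v = yV + y'V ∨ v = zV + z'V := by
  simp [gensSet, Set.mem_insert_iff]

lemma act_a2_gen : ∀ v ∈ gensSet, act (a 2) v = v := by
  intro v hv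
  rcases mem_gensSet_iff.1 hv with rfl | rfl | rfl | rfl <;>
  · simp only [eV, e'V, xV, x'V, yV, y'V, zV, z'V, map_add, act_X]
    simp only [show (a 2 : Q8) * a 0 = a 2 by decide, show (a 2 : Q8) * a 2 = a 0 by decide,
      show (a 2 : Q8) * a 1 = a 3 by decide, show (a 2 : Q8) * a 3 = a 1 by decide,
      show (a 2 : Q8) * xa 0 = xa 2 by decide, show (a 2 : Q8) * xa 2 = xa 0 by decide,
      show (a 2 : Q8) * xa 3 = xa 1 by decide, show (a 2 : Q8) * xa 1 = xa 3 by decide]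
    ring

lemma gens_hom1 : ∀ v ∈ gensSet, v.IsHomogeneous 1 := by
  intro v hv
  rcases mem_gensSet_iff.1 hv with rfl | rfl | rfl | rfl <;>
    exact (isHomogeneous_X _ _).add (isHomogeneous_X _ _)

lemma XX_ne0 {g₁ g₂ : Q8} (h : g₁ ≠ g₂) : (X g₁ + X g₂ : R8) ≠ 0 := by
  intro h0
  have := congrArg (coeff (Finsupp.single g₁ 1)) h0
  rw [coeff_add, coeff_zero, coeff_X, coeff_X'] at this
  rw [if_neg (fun hs => h (Finsupp.single_left_injective (α := Q8) one_ne_zero hs).symm)] at this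
  norm_num at this

lemma gens_ne0 : ∀ v ∈ gensSet, v ≠ 0 := by
  intro v hv
  rcases mem_gensSet_iff.1 hv with rfl | rfl | rfl | rfl <;>
    exact XX_ne0 (by decide)

lemma gens_mem_Asub : ∀ v ∈ gensSet, v ∈ Asub := fun v hv => Algebra.subset_adjoin hv

lemma Asub_fix_a2 : ∀ p ∈ Asub, act (a 2) p = p := by
  intro p hp
  induction hp using Algebra.adjoin_induction with
  | mem x hx => exact act_a2_gen x hx
  | algebraMap r => exact (act (a 2)).commutes r
  | add x y hx hy ihx ihy => rw [map_add, ihx, ihy]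
  | mul x y hx hy ihx ihy => rw [map_mul, ihx, ihy]

lemma closure_sub : ∀ m ∈ Submonoid.closure gensSet, m ∈ Asub := by
  intro m hm
  induction hm using Submonoid.closure_induction with
  | mem x hx => exact gens_mem_Asub x hx
  | one => exact Subalgebra.one_mem _
  | mul x y hx hy ihx ihy => exact Subalgebra.mul_mem _ ihx ihy

lemma closure_homog : ∀ m ∈ Submonoid.closure gensSet, ∃ d, m.IsHomogeneous d := by
  intro m hm
  induction hm using Submonoid.closure_induction with
  | mem x hx => exact ⟨1, gens_hom1 x hx⟩
  | one => exact ⟨0, isHomogeneous_one _ _⟩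
  | mul x y hx hy ihx ihy =>
      obtain ⟨d₁, h₁⟩ := ihx
      obtain ⟨d₂, h₂⟩ := ihy
      exact ⟨d₁ + d₂, h₁.mul h₂⟩

lemma mem_span_closure {p : R8} (hp : p ∈ Asub) :
    p ∈ Submodule.span ℤ (Submonoid.closure gensSet : Set R8) := by
  rw [← Algebra.adjoin_eq_span]
  exact hp

lemma hc_mem_Asub {p : R8} (hp : p ∈ Asub) (n : ℕ) : homogeneousComponent n p ∈ Asub := by
  have main : ∀ x : R8, x ∈ Submodule.span ℤ (Submonoid.closure gensSet : Set R8) →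
      homogeneousComponent n x ∈ Asub := by
    intro x hxs
    induction hxs using Submodule.span_induction with
    | mem x hx =>
        obtain ⟨d, hd⟩ := closure_homog x hx
        by_cases hnd : n = d
        · subst hnd
          rw [hc_self hd]
          exact closure_sub x hx
        · rw [hc_ne hd hnd]
          exact Subalgebra.zero_mem _
    | zero => rw [map_zero]; exact Subalgebra.zero_mem _
    | add x y hx hy ihx ihy => rw [map_add]; exact Subalgebra.add_mem _ ihx ihy
    | smul c x hx ihx => rw [map_smul]; exact Subalgebra.smul_mem _ ihx c
  exact main p (mem_span_closure hp)

lemma Tgen_mem {v q : R8} (hv : v ∈ gensSet) (hq2 : q.IsHomogeneous 2)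
    (hqa2 : act (a 2) q = q) : T (v * q) ∈ Lgrp := by
  apply AddSubgroup.subset_closure
  exact ⟨v, hv, q, hq2, hqa2, by rw [T_apply, act_a0]⟩

lemma Zcl : ∀ m ∈ Submonoid.closure gensSet, ∀ d : ℕ, m.IsHomogeneous d → 1 ≤ d → d ≤ 3 →
    ∀ q : R8, q.IsHomogeneous (3 - d) → act (a 2) q = q → T (m * q) ∈ Lgrp := by
  intro m hm
  induction hm using Submonoid.closure_induction_left with
  | one =>
      intro d hd h1 _ q _ _
      have : (0 : ℕ) = d := (isHomogeneous_one Q8 ℤ).inj_right hd one_ne_zero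
      omega
  | mul_left v hv y hy _ =>
      intro d hd h1 h3 q hq hqa2
      have hv1 : v.IsHomogeneous 1 := gens_hom1 v hv
      by_cases hy0 : y = 0
      · rw [hy0, mul_zero, zero_mul, map_zero]
        exact AddSubgroup.zero_mem _
      · obtain ⟨dy, hydy⟩ := closure_homog y hy
        have hvy : (v * y).IsHomogeneous (1 + dy) := hv1.mul hydy
        have hvyne : v * y ≠ 0 := mul_ne_zero (gens_ne0 v hv) hy0
        have hdeq : d = 1 + dy := hd.inj_right hvy hvyne
        have h2 : (y * q).IsHomogeneous 2 := by
          have hh := hydy.mul hq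
          rwa [show dy + (3 - d) = 2 by omega] at hh
        have hq2a : act (a 2) (y * q) = y * q := by
          rw [map_mul, hqa2, Asub_fix_a2 y (closure_sub y hy)]
        rw [mul_assoc]
        exact Tgen_mem hv h2 hq2a

lemma Zspan {d : ℕ} (h1 : 1 ≤ d) (h3 : d ≤ 3) {p : R8} (hp : p ∈ Asub)
    (hpd : p.IsHomogeneous d) {q : R8} (hq : q.IsHomogeneous (3 - d))
    (hqa2 : act (a 2) q = q) : T (p * q) ∈ Lgrp := by
  have key : ∀ x : R8, x ∈ Submodule.span ℤ (Submonoid.closure gensSet : Set R8) →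
      T (homogeneousComponent d x * q) ∈ Lgrp := by
    intro x hxs
    induction hxs using Submodule.span_induction with
    | mem x hx =>
        obtain ⟨dx, hdx⟩ := closure_homog x hx
        by_cases hdd : d = dx
        · subst hdd
          rw [hc_self hdx]
          exact Zcl x hx d hdx h1 h3 q hq hqa2
        · rw [hc_ne hdx hdd, zero_mul, map_zero]
          exact AddSubgroup.zero_mem _
    | zero =>
        rw [map_zero, zero_mul, map_zero]
        exact AddSubgroup.zero_mem _
    | add x y hx hy ihx ihy =>
        rw [map_add, add_mul, map_add]
        exact AddSubgroup.add_mem _ ihx ihy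
    | smul c x hx ihx =>
        rw [map_smul, smul_mul_assoc, map_smul]
        exact AddSubgroup.zsmul_mem _ ihx c
  have key2 := key p (mem_span_closure hp)
  rwa [hc_self hpd] at key2

lemma hc3_T (u : R8) :
    homogeneousComponent 3 (T u) = T (homogeneousComponent 3 u) := by
  rw [T_apply, T_apply, map_add, map_add, map_add, hc_act, hc_act, hc_act, hc_act]

lemma ZmainT {p q : R8} (hp : p ∈ Asub) (hcc : constantCoeff p = 0)
    (hqa2 : act (a 2) q = q) :
    homogeneousComponent 3 (T (p * q)) ∈ Lgrp := by
  rw [hc3_T, hc3_mul, map_sum]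
  apply AddSubgroup.sum_mem
  intro i hi
  rcases Nat.eq_zero_or_pos i with rfl | hipos
  · have hc0 : coeff 0 p = 0 := by
      rwa [constantCoeff_eq] at hcc
    have : homogeneousComponent 0 p = 0 := by
      rw [homogeneousComponent_zero, hc0, map_zero]
    rw [this, zero_mul, map_zero]
    exact AddSubgroup.zero_mem _
  · have hi3 : i ≤ 3 := by
      have := Finset.mem_range.1 hi
      omega
    refine Zspan hipos hi3 (hc_mem_Asub hp i) (homogeneousComponent_isHomogeneous i p)
      (homogeneousComponent_isHomogeneous (3 - i) q) ?_
    rw [← hc_act, hqa2]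

/-! ### Transport to `ℤ[X₀,X₁,X₂,X₃]` and the splitting lemmas -/

lemma hom_iff {σ' : Type} (φ : MvPolynomial σ' ℤ) (n : ℕ) :
    φ.IsHomogeneous n ↔ ∀ m : σ' →₀ ℕ, coeff m φ ≠ 0 → m.degree = n := by
  constructor
  · intro h m hm
    rw [Finsupp.degree_eq_weight_one]
    have h' : ∀ ⦃d : σ' →₀ ℕ⦄, coeff d φ ≠ 0 → (Finsupp.weight 1) d = n := h
    exact h' hm
  · intro h
    intro m hm
    have h2 := h m hm
    rw [Finsupp.degree_eq_weight_one] at h2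
    exact h2

lemma cc_hom {φ : R8} {n : ℕ} (h : φ.IsHomogeneous n) (hn : n ≠ 0) :
    constantCoeff φ = 0 := by
  rw [constantCoeff_eq]
  by_contra hc
  have := (hom_iff φ n).1 h 0 hc
  rw [map_zero] at this
  exact hn this.symm

lemma splitF (σf : Fin 4 → Fin 4) (hσ : σf ∘ σf = id)
    (Sel : (Fin 4 →₀ ℕ) → Prop) [DecidablePred Sel]
    (d : ℕ)
    (hSel : ∀ m : Fin 4 →₀ ℕ, m.degree = d → (Sel m ↔ ¬ Sel (Finsupp.mapDomain σf m)))
    (P : MvPolynomial (Fin 4) ℤ) (hP : P.IsHomogeneous d) (hPσ : rename σf P = P) :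
    ∃ Q : MvPolynomial (Fin 4) ℤ, Q.IsHomogeneous d ∧ P = Q + rename σf Q ∧
      ∀ τ : Fin 4 → Fin 4, τ ∘ τ = id → (∀ m, Sel m → Sel (Finsupp.mapDomain τ m)) →
        rename τ P = P → rename τ Q = Q := by
  have hmd : ∀ (σg : Fin 4 → Fin 4), σg ∘ σg = id →
      ∀ m : Fin 4 →₀ ℕ, Finsupp.mapDomain σg (Finsupp.mapDomain σg m) = m := by
    intro σg hg m
    rw [← Finsupp.mapDomain_comp, hg, Finsupp.mapDomain_id]
  have hcr : ∀ (σg : Fin 4 → Fin 4), σg ∘ σg = id →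
      ∀ (W : MvPolynomial (Fin 4) ℤ) (m : Fin 4 →₀ ℕ),
      coeff m (rename σg W) = coeff (Finsupp.mapDomain σg m) W := by
    intro σg hg W m
    have hinj : Function.Injective σg := Function.LeftInverse.injective (congrFun hg)
    conv_lhs => rw [← hmd σg hg m]
    rw [coeff_rename_mapDomain _ hinj]
  have hPc : ∀ m, coeff (Finsupp.mapDomain σf m) P = coeff m P := by
    intro m
    conv_rhs => rw [← hPσ]
    rw [hcr σf hσ]
  classical
  set Q := ∑ m ∈ P.support.filter Sel, monomial m (coeff m P) with hQdef
  have coeffQ : ∀ m, coeff m Q = if Sel m then coeff m P else 0 := by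
    intro m
    rw [hQdef, coeff_sum]
    have : ∀ m' ∈ P.support.filter Sel, coeff m (monomial m' (coeff m' P))
        = if m' = m then coeff m' P else 0 := fun m' _ => coeff_monomial m m' _
    rw [Finset.sum_congr rfl this, Finset.sum_ite_eq' (P.support.filter Sel) m
      (fun m' => coeff m' P)]
    by_cases hS : Sel m
    · by_cases hmem : m ∈ P.support
      · rw [if_pos (Finset.mem_filter.2 ⟨hmem, hS⟩), if_pos hS]
      · rw [if_pos hS, notMem_support_iff.1 hmem, if_neg (fun hc => hmem (Finset.mem_filter.1 hc).1)]
    · rw [if_neg (fun hc => hS (Finset.mem_filter.1 hc).2), if_neg hS]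
  refine ⟨Q, ?_, ?_, ?_⟩
  · rw [hom_iff]
    intro m hm
    rw [coeffQ m] at hm
    by_cases hS : Sel m
    · rw [if_pos hS] at hm
      exact (hom_iff P d).1 hP m hm
    · rw [if_neg hS] at hm
      exact absurd rfl hm
  · ext m
    rw [coeff_add, coeffQ m, hcr σf hσ, coeffQ _, hPc m]
    by_cases hc0 : coeff m P = 0
    · rw [hc0]
      simp
    · have hd : m.degree = d := (hom_iff P d).1 hP m hc0
      rcases (hSel m hd) with hiff
      by_cases hS : Sel m
      · rw [if_pos hS, if_neg (hiff.1 hS), add_zero]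
      · rw [if_neg hS, if_pos (by
          by_contra hns
          exact hS (hiff.2 hns)), zero_add]
  · intro τ hτ hτS hPτ
    have hPcτ : ∀ m, coeff (Finsupp.mapDomain τ m) P = coeff m P := by
      intro m
      conv_rhs => rw [← hPτ]
      rw [hcr τ hτ]
    ext m
    rw [hcr τ hτ, coeffQ _, coeffQ m, hPcτ m]
    by_cases hS : Sel m
    · rw [if_pos hS, if_pos (hτS m hS)]
    · rw [if_neg hS, if_neg (fun hc => by
        have := hτS _ hc
        rw [hmd τ hτ m] at this
        exact hS this)]

/-- The vector of generators of `A`. -/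
noncomputable def vvec : Fin 4 → R8 := fun l =>
  if l = 0 then eV + e'V else if l = 1 then xV + x'V else if l = 2 then yV + y'V else zV + z'V

lemma vvec0 : vvec 0 = eV + e'V := rfl
lemma vvec1 : vvec 1 = xV + x'V := rfl
lemma vvec2 : vvec 2 = yV + y'V := rfl
lemma vvec3 : vvec 3 = zV + z'V := rfl

lemma vvec_mem_gens (l : Fin 4) : vvec l ∈ gensSet := by
  fin_cases l
  · show vvec 0 ∈ gensSet
    rw [vvec0]; exact Set.mem_insert _ _
  · show vvec 1 ∈ gensSet
    rw [vvec1]; right; exact Set.mem_insert _ _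
  · show vvec 2 ∈ gensSet
    rw [vvec2]; right; right; exact Set.mem_insert _ _
  · show vvec 3 ∈ gensSet
    rw [vvec3]; right; right; right; rfl

noncomputable def psiA : MvPolynomial (Fin 4) ℤ →ₐ[ℤ] R8 := aeval vvec

noncomputable def pivar : Q8 → MvPolynomial (Fin 4) ℤ := fun g =>
  if g = a 0 then X 0 else if g = a 1 then X 1 else if g = xa 0 then X 2
    else if g = xa 3 then X 3 else 0

noncomputable def piA : R8 →ₐ[ℤ] MvPolynomial (Fin 4) ℤ := aeval pivar

lemma piA_X (g : Q8) : piA (X g) = pivar g := aeval_X _ _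

lemma pivar_a0 : pivar (a 0) = X 0 := if_pos rfl
lemma pivar_a1 : pivar (a 1) = X 1 := by
  simp only [pivar]
  rw [if_neg (by decide)]
  simp
lemma pivar_a2 : pivar (a 2) = 0 := by
  simp only [pivar]
  rw [if_neg (by decide), if_neg (by decide), if_neg (by decide), if_neg (by decide)]
lemma pivar_a3 : pivar (a 3) = 0 := by
  simp only [pivar]
  rw [if_neg (by decide), if_neg (by decide), if_neg (by decide), if_neg (by decide)]
lemma pivar_xa0 : pivar (xa 0) = X 2 := by
  simp only [pivar]
  rw [if_neg (by decide), if_neg (by decide)]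
  simp
lemma pivar_xa1 : pivar (xa 1) = 0 := by
  simp only [pivar]
  rw [if_neg (by decide), if_neg (by decide), if_neg (by decide), if_neg (by decide)]
lemma pivar_xa2 : pivar (xa 2) = 0 := by
  simp only [pivar]
  rw [if_neg (by decide), if_neg (by decide), if_neg (by decide), if_neg (by decide)]
lemma pivar_xa3 : pivar (xa 3) = X 3 := by
  simp only [pivar]
  rw [if_neg (by decide), if_neg (by decide), if_neg (by decide)]
  simp

lemma eV_def : eV = X (a 0) := rfl
lemma e'V_def : e'V = X (a 2) := rfl
lemma xV_def : xV = X (a 1) := rfl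
lemma x'V_def : x'V = X (a 3) := rfl
lemma yV_def : yV = X (xa 0) := rfl
lemma y'V_def : y'V = X (xa 2) := rfl
lemma zV_def : zV = X (xa 3) := rfl
lemma z'V_def : z'V = X (xa 1) := rfl

lemma pivvec (l : Fin 4) : piA (vvec l) = X l := by
  fin_cases l
  · show piA (vvec 0) = X 0
    rw [vvec0, eV_def, e'V_def, map_add, piA_X, piA_X, pivar_a0, pivar_a2, add_zero]
  · show piA (vvec 1) = X 1
    rw [vvec1, xV_def, x'V_def, map_add, piA_X, piA_X, pivar_a1, pivar_a3, add_zero]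
  · show piA (vvec 2) = X 2
    rw [vvec2, yV_def, y'V_def, map_add, piA_X, piA_X, pivar_xa0, pivar_xa2, add_zero]
  · show piA (vvec 3) = X 3
    rw [vvec3, zV_def, z'V_def, map_add, piA_X, piA_X, pivar_xa3, pivar_xa1, add_zero]

lemma psipi_id : ∀ p ∈ Asub, psiA (piA p) = p := by
  intro p hp
  induction hp using Algebra.adjoin_induction with
  | mem x hx =>
      rcases mem_gensSet_iff.1 hx with rfl | rfl | rfl | rfl
      · rw [show eV + e'V = vvec 0 from rfl, pivvec]
        exact aeval_X _ _
      · rw [show xV + x'V = vvec 1 from rfl, pivvec]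
        exact aeval_X _ _
      · rw [show yV + y'V = vvec 2 from rfl, pivvec]
        exact aeval_X _ _
      · rw [show zV + z'V = vvec 3 from rfl, pivvec]
        exact aeval_X _ _
  | algebraMap r => rw [AlgHom.commutes, AlgHom.commutes]
  | add x y hx hy ihx ihy => rw [map_add, map_add, ihx, ihy]
  | mul x y hx hy ihx ihy => rw [map_mul, map_mul, ihx, ihy]

lemma psiA_mem_Asub (Q : MvPolynomial (Fin 4) ℤ) : psiA Q ∈ Asub := by
  induction Q using MvPolynomial.induction_on with
  | C z =>
      rw [show psiA (C z) = algebraMap ℤ R8 z from aeval_C _ _]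
      exact Subalgebra.algebraMap_mem _ z
  | add x y ihx ihy => rw [map_add]; exact Subalgebra.add_mem _ ihx ihy
  | mul_X q l ih =>
      rw [map_mul]
      exact Subalgebra.mul_mem _ ih (by
        rw [show psiA (X l) = vvec l from aeval_X _ _]
        exact gens_mem_Asub _ (vvec_mem_gens l))

lemma psi_hom {Q : MvPolynomial (Fin 4) ℤ} {d : ℕ} (h : Q.IsHomogeneous d) :
    (psiA Q).IsHomogeneous d := by
  have := h.aeval vvec (fun l => gens_hom1 _ (vvec_mem_gens l))
  rwa [one_mul] at this

lemma pivar_hom (g : Q8) : (pivar g).IsHomogeneous 1 := by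
  simp only [pivar]
  split_ifs <;> first
    | exact isHomogeneous_X _ _
    | exact isHomogeneous_zero _ _ _

lemma pi_hom {p : R8} {d : ℕ} (h : p.IsHomogeneous d) : (piA p).IsHomogeneous d := by
  have := h.aeval pivar (fun g => pivar_hom g)
  rwa [one_mul] at this

lemma psi_rename (g : Q8) (σf : Fin 4 → Fin 4)
    (hcorr : ∀ l, act g (vvec l) = vvec (σf l)) (Q : MvPolynomial (Fin 4) ℤ) :
    psiA (rename σf Q) = act g (psiA Q) := by
  have hcomp : (psiA.comp (rename σf) : MvPolynomial (Fin 4) ℤ →ₐ[ℤ] R8)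
      = (act g).comp psiA := by
    apply MvPolynomial.algHom_ext
    intro l
    rw [AlgHom.comp_apply, AlgHom.comp_apply, rename_X,
      show psiA (X (σf l)) = vvec (σf l) from aeval_X _ _,
      show psiA (X l) = vvec l from aeval_X _ _, hcorr l]
  exact DFunLike.congr_fun hcomp Q

lemma pi_act (g : Q8) (σf : Fin 4 → Fin 4)
    (hcorr : ∀ l, act g (vvec l) = vvec (σf l)) :
    ∀ p ∈ Asub, piA (act g p) = rename σf (piA p) := by
  intro p hp
  induction hp using Algebra.adjoin_induction with
  | mem x hx =>
      have : ∃ l, x = vvec l := by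
        rcases mem_gensSet_iff.1 hx with rfl | rfl | rfl | rfl
        exacts [⟨0, rfl⟩, ⟨1, rfl⟩, ⟨2, rfl⟩, ⟨3, rfl⟩]
      obtain ⟨l, rfl⟩ := this
      rw [hcorr l, pivvec, pivvec, rename_X]
  | algebraMap r => rw [AlgHom.commutes, AlgHom.commutes, AlgHom.commutes]
  | add x y hx hy ihx ihy =>
      calc piA (act g (x + y)) = piA (act g x) + piA (act g y) := by rw [map_add, map_add]
        _ = rename σf (piA x) + rename σf (piA y) := by rw [ihx, ihy]
        _ = rename σf (piA x + piA y) := (map_add _ _ _).symm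
        _ = rename σf (piA (x + y)) := congrArg _ (map_add piA x y).symm
  | mul x y hx hy ihx ihy =>
      calc piA (act g (x * y)) = piA (act g x) * piA (act g y) := by rw [map_mul, map_mul]
        _ = rename σf (piA x) * rename σf (piA y) := by rw [ihx, ihy]
        _ = rename σf (piA x * piA y) := (map_mul _ _ _).symm
        _ = rename σf (piA (x * y)) := congrArg _ (map_mul piA x y).symm

lemma splitA (g : Q8) (σf : Fin 4 → Fin 4) (hσ : σf ∘ σf = id)
    (hcorr : ∀ l, act g (vvec l) = vvec (σf l))
    (Sel : (Fin 4 →₀ ℕ) → Prop) [DecidablePred Sel] (d : ℕ)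
    (hSel : ∀ m : Fin 4 →₀ ℕ, m.degree = d → (Sel m ↔ ¬ Sel (Finsupp.mapDomain σf m)))
    {p : R8} (hp : p ∈ Asub) (hpd : p.IsHomogeneous d) (hfix : act g p = p) :
    ∃ r : R8, r ∈ Asub ∧ r.IsHomogeneous d ∧ p = r + act g r ∧
      ∀ (g' : Q8) (τ : Fin 4 → Fin 4), τ ∘ τ = id → (∀ l, act g' (vvec l) = vvec (τ l)) →
        (∀ m, Sel m → Sel (Finsupp.mapDomain τ m)) → act g' p = p → act g' r = r := by
  have hPd : (piA p).IsHomogeneous d := pi_hom hpd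
  have hPσ : rename σf (piA p) = piA p := by
    rw [← pi_act g σf hcorr p hp, hfix]
  obtain ⟨Q, hQd, hQsplit, hQτ⟩ := splitF σf hσ Sel d hSel (piA p) hPd hPσ
  refine ⟨psiA Q, psiA_mem_Asub Q, psi_hom hQd, ?_, ?_⟩
  · conv_lhs => rw [← psipi_id p hp, hQsplit]
    rw [map_add, psi_rename g σf hcorr Q]
  · intro g' τ hτ hcorr' hτS hfix'
    have hPτ : rename τ (piA p) = piA p := by
      rw [← pi_act g' τ hcorr' p hp, hfix']
    have hQQ := hQτ τ hτ hτS hPτ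
    rw [← psi_rename g' τ hcorr' Q, hQQ]

noncomputable def sigI : Fin 4 → Fin 4 := fun l =>
  if l = 0 then 1 else if l = 1 then 0 else if l = 2 then 3 else 2
noncomputable def sigJ : Fin 4 → Fin 4 := fun l =>
  if l = 0 then 2 else if l = 1 then 3 else if l = 2 then 0 else 1
noncomputable def sigK : Fin 4 → Fin 4 := fun l =>
  if l = 0 then 3 else if l = 1 then 2 else if l = 2 then 1 else 0

lemma sigI_inv : sigI ∘ sigI = id := by
  funext l; fin_cases l <;> rfl
lemma sigJ_inv : sigJ ∘ sigJ = id := by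
  funext l; fin_cases l <;> rfl
lemma sigK_inv : sigK ∘ sigK = id := by
  funext l; fin_cases l <;> rfl

lemma corr_i (l : Fin 4) : act (a 1) (vvec l) = vvec (sigI l) := by
  fin_cases l
  · show act (a 1) (vvec 0) = vvec (sigI 0)
    rw [show sigI 0 = 1 from rfl, vvec0, vvec1, eV_def, e'V_def, xV_def, x'V_def, map_add,
      act_X, act_X, show (a 1 : Q8) * a 0 = a 1 by decide, show (a 1 : Q8) * a 2 = a 3 by decide]
  · show act (a 1) (vvec 1) = vvec (sigI 1)
    rw [show sigI 1 = 0 from rfl, vvec1, vvec0, eV_def, e'V_def, xV_def, x'V_def, map_add,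
      act_X, act_X, show (a 1 : Q8) * a 1 = a 2 by decide, show (a 1 : Q8) * a 3 = a 0 by decide]
    ring
  · show act (a 1) (vvec 2) = vvec (sigI 2)
    rw [show sigI 2 = 3 from rfl, vvec2, vvec3, yV_def, y'V_def, zV_def, z'V_def, map_add,
      act_X, act_X, show (a 1 : Q8) * xa 0 = xa 3 by decide, show (a 1 : Q8) * xa 2 = xa 1 by decide]
  · show act (a 1) (vvec 3) = vvec (sigI 3)
    rw [show sigI 3 = 2 from rfl, vvec3, vvec2, yV_def, y'V_def, zV_def, z'V_def, map_add,
      act_X, act_X, show (a 1 : Q8) * xa 3 = xa 2 by decide, show (a 1 : Q8) * xa 1 = xa 0 by decide]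
    ring

lemma corr_j (l : Fin 4) : act (xa 0) (vvec l) = vvec (sigJ l) := by
  fin_cases l
  · show act (xa 0) (vvec 0) = vvec (sigJ 0)
    rw [show sigJ 0 = 2 from rfl, vvec0, vvec2, eV_def, e'V_def, yV_def, y'V_def, map_add,
      act_X, act_X, show (xa 0 : Q8) * a 0 = xa 0 by decide, show (xa 0 : Q8) * a 2 = xa 2 by decide]
  · show act (xa 0) (vvec 1) = vvec (sigJ 1)
    rw [show sigJ 1 = 3 from rfl, vvec1, vvec3, xV_def, x'V_def, zV_def, z'V_def, map_add,
      act_X, act_X, show (xa 0 : Q8) * a 1 = xa 1 by decide, show (xa 0 : Q8) * a 3 = xa 3 by decide]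
    ring
  · show act (xa 0) (vvec 2) = vvec (sigJ 2)
    rw [show sigJ 2 = 0 from rfl, vvec2, vvec0, eV_def, e'V_def, yV_def, y'V_def, map_add,
      act_X, act_X, show (xa 0 : Q8) * xa 0 = a 2 by decide, show (xa 0 : Q8) * xa 2 = a 0 by decide]
    ring
  · show act (xa 0) (vvec 3) = vvec (sigJ 3)
    rw [show sigJ 3 = 1 from rfl, vvec3, vvec1, xV_def, x'V_def, zV_def, z'V_def, map_add,
      act_X, act_X, show (xa 0 : Q8) * xa 3 = a 1 by decide, show (xa 0 : Q8) * xa 1 = a 3 by decide]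

lemma corr_k (l : Fin 4) : act (xa 3) (vvec l) = vvec (sigK l) := by
  fin_cases l
  · show act (xa 3) (vvec 0) = vvec (sigK 0)
    rw [show sigK 0 = 3 from rfl, vvec0, vvec3, eV_def, e'V_def, zV_def, z'V_def, map_add,
      act_X, act_X, show (xa 3 : Q8) * a 0 = xa 3 by decide, show (xa 3 : Q8) * a 2 = xa 1 by decide]
  · show act (xa 3) (vvec 1) = vvec (sigK 1)
    rw [show sigK 1 = 2 from rfl, vvec1, vvec2, xV_def, x'V_def, yV_def, y'V_def, map_add,
      act_X, act_X, show (xa 3 : Q8) * a 1 = xa 0 by decide, show (xa 3 : Q8) * a 3 = xa 2 by decide]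
  · show act (xa 3) (vvec 2) = vvec (sigK 2)
    rw [show sigK 2 = 1 from rfl, vvec2, vvec1, xV_def, x'V_def, yV_def, y'V_def, map_add,
      act_X, act_X, show (xa 3 : Q8) * xa 0 = a 3 by decide, show (xa 3 : Q8) * xa 2 = a 1 by decide]
    ring
  · show act (xa 3) (vvec 3) = vvec (sigK 3)
    rw [show sigK 3 = 0 from rfl, vvec3, vvec0, eV_def, e'V_def, zV_def, z'V_def, map_add,
      act_X, act_X, show (xa 3 : Q8) * xa 3 = a 2 by decide, show (xa 3 : Q8) * xa 1 = a 0 by decide]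
    ring

lemma mapDomain_invol (σf : Fin 4 → Fin 4) (hσ : σf ∘ σf = id) (m : Fin 4 →₀ ℕ) (l : Fin 4) :
    (Finsupp.mapDomain σf m) l = m (σf l) := by
  have hinj : Function.Injective σf := Function.LeftInverse.injective (congrFun hσ)
  conv_lhs => rw [show l = σf (σf l) from (congrFun hσ l).symm]
  rw [Finsupp.mapDomain_apply hinj]

lemma degree4 (m : Fin 4 →₀ ℕ) : m.degree = m 0 + m 1 + m 2 + m 3 := by
  rw [Finsupp.degree_apply]
  rw [Finset.sum_subset (Finset.subset_univ _) (fun x _ hx => Finsupp.notMem_support_iff.1 hx)]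
  rw [Fin.sum_univ_four]

lemma splitI {d : ℕ} (hodd : Odd d) {p : R8} (hp : p ∈ Asub) (hpd : p.IsHomogeneous d)
    (hfix : act (a 1) p = p) :
    ∃ r : R8, r ∈ Asub ∧ r.IsHomogeneous d ∧ p = r + act (a 1) r := by
  obtain ⟨r, h1, h2, h3, _⟩ := splitA (a 1) sigI sigI_inv corr_i
    (fun m => 2 * (m 0 + m 2) < d) d
    (fun m hm => by
      rw [mapDomain_invol sigI sigI_inv m 0, mapDomain_invol sigI sigI_inv m 2,
        show sigI 0 = 1 from rfl, show sigI 2 = 3 from rfl]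
      rw [degree4] at hm
      obtain ⟨k, hk⟩ := hodd
      omega) hp hpd hfix
  exact ⟨r, h1, h2, h3⟩

lemma splitJ {d : ℕ} (hodd : Odd d) {p : R8} (hp : p ∈ Asub) (hpd : p.IsHomogeneous d)
    (hfix : act (xa 0) p = p) :
    ∃ r : R8, r ∈ Asub ∧ r.IsHomogeneous d ∧ p = r + act (xa 0) r ∧
      (act (a 1) p = p → act (a 1) r = r) := by
  obtain ⟨r, h1, h2, h3, h4⟩ := splitA (xa 0) sigJ sigJ_inv corr_j
    (fun m => 2 * (m 0 + m 1) < d) d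
    (fun m hm => by
      rw [mapDomain_invol sigJ sigJ_inv m 0, mapDomain_invol sigJ sigJ_inv m 1,
        show sigJ 0 = 2 from rfl, show sigJ 1 = 3 from rfl]
      rw [degree4] at hm
      obtain ⟨k, hk⟩ := hodd
      omega) hp hpd hfix
  refine ⟨r, h1, h2, h3, fun hfix1 => ?_⟩
  exact h4 (a 1) sigI sigI_inv corr_i
    (fun m hm => by
      rwa [mapDomain_invol sigI sigI_inv m 0, mapDomain_invol sigI sigI_inv m 1,
        show sigI 0 = 1 from rfl, show sigI 1 = 0 from rfl, Nat.add_comm (m 1) (m 0)]) hfix1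

lemma splitK {d : ℕ} (hodd : Odd d) {p : R8} (hp : p ∈ Asub) (hpd : p.IsHomogeneous d)
    (hfix : act (xa 3) p = p) :
    ∃ r : R8, r ∈ Asub ∧ r.IsHomogeneous d ∧ p = r + act (xa 3) r := by
  obtain ⟨r, h1, h2, h3, _⟩ := splitA (xa 3) sigK sigK_inv corr_k
    (fun m => 2 * (m 0 + m 1) < d) d
    (fun m hm => by
      rw [mapDomain_invol sigK sigK_inv m 0, mapDomain_invol sigK sigK_inv m 1,
        show sigK 0 = 3 from rfl, show sigK 1 = 2 from rfl]
      rw [degree4] at hm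
      obtain ⟨k, hk⟩ := hodd
      omega) hp hpd hfix
  exact ⟨r, h1, h2, h3⟩

lemma split4 {d : ℕ} (hodd : Odd d) {p : R8} (hp : p ∈ Asub) (hpd : p.IsHomogeneous d)
    (hfix1 : act (a 1) p = p) (hfix2 : act (xa 0) p = p) :
    ∃ r : R8, r ∈ Asub ∧ r.IsHomogeneous d ∧
      p = r + act (a 1) r + act (xa 0) r + act (xa 3) r := by
  obtain ⟨w, hw1, hw2, hw3, hw4⟩ := splitJ hodd hp hpd hfix2
  have hwfix : act (a 1) w = w := hw4 hfix1
  obtain ⟨r, hr1, hr2, hr3⟩ := splitI hodd hw1 hw2 hwfix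
  refine ⟨r, hr1, hr2, ?_⟩
  have e1 : act (xa 0) (act (a 1) r) = act (xa 3) r := by
    rw [act_act, show (xa 0 : Q8) * a 1 = xa 1 by decide,
      show (xa 1 : Q8) = xa 3 * a 2 by decide, ← act_act, Asub_fix_a2 r hr1]
  rw [hw3, hr3, map_add, e1]
  ring

/-! ### Structure of invariant homogeneous polynomials of degree 1 -/

lemma deg_single (g : Q8) : (Finsupp.single g 1).degree = 1 := by
  rw [Finsupp.degree_apply, Finsupp.support_single_ne_zero g one_ne_zero, Finset.sum_singleton,
    Finsupp.single_eq_same]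

lemma deg1_single {m : Q8 →₀ ℕ} (hm : m.degree = 1) : ∃ g, m = Finsupp.single g 1 := by
  have hne : m.support.Nonempty := by
    by_contra h
    rw [Finset.not_nonempty_iff_eq_empty] at h
    rw [Finsupp.degree_apply, h, Finset.sum_empty] at hm
    exact one_ne_zero hm.symm
  obtain ⟨g, hg⟩ := hne
  have hg1 : 1 ≤ m g := Nat.one_le_iff_ne_zero.2 (Finsupp.mem_support_iff.1 hg)
  have hle : m g ≤ m.degree := Finsupp.le_degree g m
  have hothers : ∀ g', g' ≠ g → m g' = 0 := by
    intro g' hgg'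
    by_contra h0
    have hg'1 : 1 ≤ m g' := Nat.one_le_iff_ne_zero.2 h0
    have hg'supp : g' ∈ m.support := Finsupp.mem_support_iff.2 h0
    have hsub : ({g, g'} : Finset Q8) ⊆ m.support := by
      intro t ht
      rcases Finset.mem_insert.1 ht with rfl | ht
      · exact hg
      · rw [Finset.mem_singleton.1 ht]
        exact hg'supp
    have hsum : m g + m g' ≤ m.degree := by
      rw [Finsupp.degree_apply]
      calc m g + m g' = ∑ t ∈ ({g, g'} : Finset Q8), m t := by
            rw [Finset.sum_insert (by simpa using Ne.symm hgg'), Finset.sum_singleton]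
        _ ≤ _ := Finset.sum_le_sum_of_subset hsub
    omega
  refine ⟨g, ?_⟩
  ext t
  by_cases ht : t = g
  · subst ht
    rw [Finsupp.single_eq_same]
    omega
  · rw [Finsupp.single_eq_of_ne ht]
    exact hothers t ht

lemma hom1_struct {q : R8} (h : q.IsHomogeneous 1) :
    q = ∑ g : Q8, C (coeff (Finsupp.single g 1) q) * X g := by
  ext m
  have hterm : ∀ g : Q8, coeff m (C (coeff (Finsupp.single g 1) q) * X g)
      = if Finsupp.single g 1 = m then coeff (Finsupp.single g 1) q else 0 := by
    intro g
    rw [coeff_C_mul, coeff_X', mul_ite, mul_one, mul_zero]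
  rw [coeff_sum, Finset.sum_congr rfl (fun g _ => hterm g)]
  by_cases hm1 : m.degree = 1
  · obtain ⟨g₀, rfl⟩ := deg1_single hm1
    rw [Finset.sum_eq_single g₀]
    · rw [if_pos rfl]
    · intro g _ hgg
      rw [if_neg]
      intro hc
      exact hgg (Finsupp.single_left_injective one_ne_zero hc)
    · intro habs
      exact absurd (Finset.mem_univ _) habs
  · rw [h.coeff_eq_zero hm1]
    symm
    apply Finset.sum_eq_zero
    intro g _
    rw [if_neg]
    intro hc
    exact hm1 (by rw [← hc, deg_single])

lemma sumQ8_expand (f : Q8 → R8) : ∑ g : Q8, f g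
    = f (a 0) + f (a 1) + f (a 2) + f (a 3) + f (xa 0) + f (xa 1) + f (xa 2) + f (xa 3) := by
  have huniv : (Finset.univ : Finset Q8) = {a 0, a 1, a 2, a 3, xa 0, xa 1, xa 2, xa 3} := by
    decide
  rw [huniv]
  rw [Finset.sum_insert (by decide), Finset.sum_insert (by decide),
    Finset.sum_insert (by decide), Finset.sum_insert (by decide),
    Finset.sum_insert (by decide), Finset.sum_insert (by decide),
    Finset.sum_insert (by decide), Finset.sum_singleton]
  ring

lemma inv_coeff1 {q : R8} {g : Q8} (h : Q8) (hfix : act g q = q) :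
    coeff (Finsupp.single (g * h) 1) q = coeff (Finsupp.single h 1) q := by
  conv_lhs => rw [← hfix]
  have hm : Finsupp.single (g * h) 1
      = Finsupp.mapDomain (fun x : Q8 => g * x) (Finsupp.single h 1) := by
    rw [Finsupp.mapDomain_single]
  rw [hm]
  show coeff _ (rename _ q) = _
  exact coeff_rename_mapDomain _ (fun x y hxy => by simpa using hxy) q _

lemma orb1_i {q : R8} (h1 : q.IsHomogeneous 1) (hfix : act (a 1) q = q) :
    q = C (coeff (Finsupp.single (a 0 : Q8) 1) q) * (eV + e'V + (xV + x'V))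
      + C (coeff (Finsupp.single (xa 0 : Q8) 1) q) * (yV + y'V + (zV + z'V)) := by
  have e1 : coeff (Finsupp.single (a 1 : Q8) 1) q = coeff (Finsupp.single (a 0 : Q8) 1) q := by
    have h := inv_coeff1 (a 0) hfix
    rwa [show (a 1 : Q8) * a 0 = a 1 by decide] at h
  have e2 : coeff (Finsupp.single (a 2 : Q8) 1) q = coeff (Finsupp.single (a 0 : Q8) 1) q := by
    have h := inv_coeff1 (a 1) hfix
    rwa [show (a 1 : Q8) * a 1 = a 2 by decide, e1] at h
  have e3 : coeff (Finsupp.single (a 3 : Q8) 1) q = coeff (Finsupp.single (a 0 : Q8) 1) q := by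
    have h := inv_coeff1 (a 2) hfix
    rwa [show (a 1 : Q8) * a 2 = a 3 by decide, e2] at h
  have f1 : coeff (Finsupp.single (xa 3 : Q8) 1) q = coeff (Finsupp.single (xa 0 : Q8) 1) q := by
    have h := inv_coeff1 (xa 0) hfix
    rwa [show (a 1 : Q8) * xa 0 = xa 3 by decide] at h
  have f2 : coeff (Finsupp.single (xa 2 : Q8) 1) q = coeff (Finsupp.single (xa 0 : Q8) 1) q := by
    have h := inv_coeff1 (xa 3) hfix
    rwa [show (a 1 : Q8) * xa 3 = xa 2 by decide, f1] at h
  have f3 : coeff (Finsupp.single (xa 1 : Q8) 1) q = coeff (Finsupp.single (xa 0 : Q8) 1) q := by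
    have h := inv_coeff1 (xa 2) hfix
    rwa [show (a 1 : Q8) * xa 2 = xa 1 by decide, f2] at h
  conv_lhs => rw [hom1_struct h1]
  rw [sumQ8_expand (fun g => C (coeff (Finsupp.single g 1) q) * X g)]
  rw [e1, e2, e3, f1, f2, f3, eV_def, e'V_def, xV_def, x'V_def, yV_def, y'V_def, zV_def, z'V_def]
  ring

lemma orb1_j {q : R8} (h1 : q.IsHomogeneous 1) (hfix : act (xa 0) q = q) :
    q = C (coeff (Finsupp.single (a 0 : Q8) 1) q) * (eV + e'V + (yV + y'V))
      + C (coeff (Finsupp.single (a 1 : Q8) 1) q) * (xV + x'V + (zV + z'V)) := by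
  have e1 : coeff (Finsupp.single (xa 0 : Q8) 1) q = coeff (Finsupp.single (a 0 : Q8) 1) q := by
    have h := inv_coeff1 (a 0) hfix
    rwa [show (xa 0 : Q8) * a 0 = xa 0 by decide] at h
  have e2 : coeff (Finsupp.single (a 2 : Q8) 1) q = coeff (Finsupp.single (a 0 : Q8) 1) q := by
    have h := inv_coeff1 (xa 0) hfix
    rwa [show (xa 0 : Q8) * xa 0 = a 2 by decide, e1] at h
  have e3 : coeff (Finsupp.single (xa 2 : Q8) 1) q = coeff (Finsupp.single (a 0 : Q8) 1) q := by
    have h := inv_coeff1 (a 2) hfix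
    rwa [show (xa 0 : Q8) * a 2 = xa 2 by decide, e2] at h
  have f1 : coeff (Finsupp.single (xa 1 : Q8) 1) q = coeff (Finsupp.single (a 1 : Q8) 1) q := by
    have h := inv_coeff1 (a 1) hfix
    rwa [show (xa 0 : Q8) * a 1 = xa 1 by decide] at h
  have f2 : coeff (Finsupp.single (a 3 : Q8) 1) q = coeff (Finsupp.single (a 1 : Q8) 1) q := by
    have h := inv_coeff1 (xa 1) hfix
    rwa [show (xa 0 : Q8) * xa 1 = a 3 by decide, f1] at h
  have f3 : coeff (Finsupp.single (xa 3 : Q8) 1) q = coeff (Finsupp.single (a 1 : Q8) 1) q := by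
    have h := inv_coeff1 (a 3) hfix
    rwa [show (xa 0 : Q8) * a 3 = xa 3 by decide, f2] at h
  conv_lhs => rw [hom1_struct h1]
  rw [sumQ8_expand (fun g => C (coeff (Finsupp.single g 1) q) * X g)]
  rw [e1, e2, e3, f1, f2, f3, eV_def, e'V_def, xV_def, x'V_def, yV_def, y'V_def, zV_def, z'V_def]
  ring

lemma orb1_k {q : R8} (h1 : q.IsHomogeneous 1) (hfix : act (xa 3) q = q) :
    q = C (coeff (Finsupp.single (a 0 : Q8) 1) q) * (eV + e'V + (zV + z'V))
      + C (coeff (Finsupp.single (a 1 : Q8) 1) q) * (xV + x'V + (yV + y'V)) := by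
  have e1 : coeff (Finsupp.single (xa 3 : Q8) 1) q = coeff (Finsupp.single (a 0 : Q8) 1) q := by
    have h := inv_coeff1 (a 0) hfix
    rwa [show (xa 3 : Q8) * a 0 = xa 3 by decide] at h
  have e2 : coeff (Finsupp.single (a 2 : Q8) 1) q = coeff (Finsupp.single (a 0 : Q8) 1) q := by
    have h := inv_coeff1 (xa 3) hfix
    rwa [show (xa 3 : Q8) * xa 3 = a 2 by decide, e1] at h
  have e3 : coeff (Finsupp.single (xa 1 : Q8) 1) q = coeff (Finsupp.single (a 0 : Q8) 1) q := by
    have h := inv_coeff1 (a 2) hfix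
    rwa [show (xa 3 : Q8) * a 2 = xa 1 by decide, e2] at h
  have f1 : coeff (Finsupp.single (xa 0 : Q8) 1) q = coeff (Finsupp.single (a 1 : Q8) 1) q := by
    have h := inv_coeff1 (a 1) hfix
    rwa [show (xa 3 : Q8) * a 1 = xa 0 by decide] at h
  have f2 : coeff (Finsupp.single (a 3 : Q8) 1) q = coeff (Finsupp.single (a 1 : Q8) 1) q := by
    have h := inv_coeff1 (xa 0) hfix
    rwa [show (xa 3 : Q8) * xa 0 = a 3 by decide, f1] at h
  have f3 : coeff (Finsupp.single (xa 2 : Q8) 1) q = coeff (Finsupp.single (a 1 : Q8) 1) q := by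
    have h := inv_coeff1 (a 3) hfix
    rwa [show (xa 3 : Q8) * a 3 = xa 2 by decide, f2] at h
  conv_lhs => rw [hom1_struct h1]
  rw [sumQ8_expand (fun g => C (coeff (Finsupp.single g 1) q) * X g)]
  rw [e1, e2, e3, f1, f2, f3, eV_def, e'V_def, xV_def, x'V_def, yV_def, y'V_def, zV_def, z'V_def]
  ring

lemma orb1_full {q : R8} (h1 : q.IsHomogeneous 1) (hfix1 : act (a 1) q = q)
    (hfix2 : act (xa 0) q = q) :
    q = C (coeff (Finsupp.single (a 0 : Q8) 1) q)
      * (eV + e'V + (xV + x'V) + (yV + y'V) + (zV + z'V)) := by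
  have e0 : coeff (Finsupp.single (xa 0 : Q8) 1) q = coeff (Finsupp.single (a 0 : Q8) 1) q := by
    have h := inv_coeff1 (a 0) hfix2
    rwa [show (xa 0 : Q8) * a 0 = xa 0 by decide] at h
  have := orb1_i h1 hfix1
  rw [e0] at this
  conv_lhs => rw [this]
  ring

/-! ### Assembly of the main theorem -/

lemma act_C (g : Q8) (c : ℤ) : act g (C c : R8) = C c := rename_C _ _

lemma T4i {r q' : R8} (hr : r ∈ Asub) (hq'g : act (a 1) q' = q') (hq'2 : act (a 2) q' = q') :
    (r + act (a 1) r) * q' + act (xa 0) ((r + act (a 1) r) * q') = T (r * q') := by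
  have h2rq : act (a 2) (r * q') = r * q' := by
    rw [map_mul, Asub_fix_a2 r hr, hq'2]
  have e1 : act (a 1) r * q' = act (a 1) (r * q') := by
    rw [map_mul, hq'g]
  have e2 : act (xa 0) (act (a 1) (r * q')) = act (xa 3) (r * q') := by
    rw [act_act, show (xa 0 : Q8) * a 1 = xa 1 by decide,
      show (xa 1 : Q8) = xa 3 * a 2 by decide, ← act_act, h2rq]
  rw [T_apply, act_a0, add_mul, e1, map_add, e2]
  ring

lemma T4j {r q' : R8} (hq'g : act (xa 0) q' = q') :
    (r + act (xa 0) r) * q' + act (a 1) ((r + act (xa 0) r) * q') = T (r * q') := by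
  have e1 : act (xa 0) r * q' = act (xa 0) (r * q') := by rw [map_mul, hq'g]
  have e2 : act (a 1) (act (xa 0) (r * q')) = act (xa 3) (r * q') := by
    rw [act_act, show (a 1 : Q8) * xa 0 = xa 3 by decide]
  rw [T_apply, act_a0, add_mul, e1, map_add, e2]
  ring

lemma T4k {r q' : R8} (hr : r ∈ Asub) (hq'g : act (xa 3) q' = q') (hq'2 : act (a 2) q' = q') :
    (r + act (xa 3) r) * q' + act (a 1) ((r + act (xa 3) r) * q') = T (r * q') := by
  have h2rq : act (a 2) (r * q') = r * q' := by
    rw [map_mul, Asub_fix_a2 r hr, hq'2]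
  have e1 : act (xa 3) r * q' = act (xa 3) (r * q') := by rw [map_mul, hq'g]
  have e2 : act (a 1) (act (xa 3) (r * q')) = act (xa 0) (r * q') := by
    rw [act_act, show (a 1 : Q8) * xa 3 = xa 2 by decide,
      show (xa 2 : Q8) = xa 0 * a 2 by decide, ← act_act, h2rq]
  rw [T_apply, act_a0, add_mul, e1, map_add, e2]
  ring

lemma T_mem_of {r q' : R8} (hr : r ∈ Asub) (hcc : constantCoeff r = 0)
    (hq'2 : act (a 2) q' = q') (hom3 : (r * q').IsHomogeneous 3) : T (r * q') ∈ Lgrp := by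
  have h := ZmainT hr hcc hq'2
  rwa [hc3_T, hc_self hom3] at h

lemma cc_split {p r : R8} {g : Q8} (hsplit : p = r + act g r) (hccp : constantCoeff p = 0) :
    constantCoeff r = 0 := by
  have h := congrArg constantCoeff hsplit
  rw [map_add, constantCoeff_act, hccp] at h
  omega

lemma cc_split4 {p r : R8} (hsplit : p = r + act (a 1) r + act (xa 0) r + act (xa 3) r)
    (hccp : constantCoeff p = 0) : constantCoeff r = 0 := by
  have h := congrArg constantCoeff hsplit
  rw [map_add, map_add, map_add, constantCoeff_act, constantCoeff_act, constantCoeff_act,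
    hccp] at h
  omega

lemma oddI_mem {dw : ℕ} (hodd : Odd dw) (hdw3 : dw ≤ 3) {w q' : R8} (hw : w ∈ Asub)
    (hwd : w.IsHomogeneous dw) (hwfix : act (a 1) w = w)
    (hq'g : act (a 1) q' = q') (hq'2 : act (a 2) q' = q')
    (hq'hom : q'.IsHomogeneous (3 - dw)) :
    w * q' + act (xa 0) (w * q') ∈ Lgrp := by
  obtain ⟨r, hrA, hrhom, hsplit⟩ := splitI hodd hw hwd hwfix
  have hcc : constantCoeff r = 0 :=
    cc_split hsplit (cc_hom hwd (by rcases hodd with ⟨k, hk⟩; omega))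
  have hT : w * q' + act (xa 0) (w * q') = T (r * q') := by
    rw [hsplit]
    exact T4i hrA hq'g hq'2
  rw [hT]
  refine T_mem_of hrA hcc hq'2 ?_
  have h := hrhom.mul hq'hom
  rwa [show dw + (3 - dw) = 3 by omega] at h

lemma oddJ_mem {dw : ℕ} (hodd : Odd dw) (hdw3 : dw ≤ 3) {w q' : R8} (hw : w ∈ Asub)
    (hwd : w.IsHomogeneous dw) (hwfix : act (xa 0) w = w)
    (hq'g : act (xa 0) q' = q') (hq'2 : act (a 2) q' = q')
    (hq'hom : q'.IsHomogeneous (3 - dw)) :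
    w * q' + act (a 1) (w * q') ∈ Lgrp := by
  obtain ⟨r, hrA, hrhom, hsplit, _⟩ := splitJ hodd hw hwd hwfix
  have hcc : constantCoeff r = 0 :=
    cc_split hsplit (cc_hom hwd (by rcases hodd with ⟨k, hk⟩; omega))
  have hT : w * q' + act (a 1) (w * q') = T (r * q') := by
    rw [hsplit]
    exact T4j hq'g
  rw [hT]
  refine T_mem_of hrA hcc hq'2 ?_
  have h := hrhom.mul hq'hom
  rwa [show dw + (3 - dw) = 3 by omega] at h

lemma oddK_mem {dw : ℕ} (hodd : Odd dw) (hdw3 : dw ≤ 3) {w q' : R8} (hw : w ∈ Asub)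
    (hwd : w.IsHomogeneous dw) (hwfix : act (xa 3) w = w)
    (hq'g : act (xa 3) q' = q') (hq'2 : act (a 2) q' = q')
    (hq'hom : q'.IsHomogeneous (3 - dw)) :
    w * q' + act (a 1) (w * q') ∈ Lgrp := by
  obtain ⟨r, hrA, hrhom, hsplit⟩ := splitK hodd hw hwd hwfix
  have hcc : constantCoeff r = 0 :=
    cc_split hsplit (cc_hom hwd (by rcases hodd with ⟨k, hk⟩; omega))
  have hT : w * q' + act (a 1) (w * q') = T (r * q') := by
    rw [hsplit]
    exact T4k hrA hq'g hq'2
  rw [hT]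
  refine T_mem_of hrA hcc hq'2 ?_
  have h := hrhom.mul hq'hom
  rwa [show dw + (3 - dw) = 3 by omega] at h

lemma act_i_EX : act (a 1) (eV + e'V + (xV + x'V)) = eV + e'V + (xV + x'V) := by
  rw [map_add, show eV + e'V = vvec 0 from rfl, show xV + x'V = vvec 1 from rfl,
    corr_i 0, corr_i 1, show sigI 0 = 1 from rfl, show sigI 1 = 0 from rfl]
  ring

lemma act_i_YZ : act (a 1) (yV + y'V + (zV + z'V)) = yV + y'V + (zV + z'V) := by
  rw [map_add, show yV + y'V = vvec 2 from rfl, show zV + z'V = vvec 3 from rfl,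
    corr_i 2, corr_i 3, show sigI 2 = 3 from rfl, show sigI 3 = 2 from rfl]
  ring

lemma act_j_EY : act (xa 0) (eV + e'V + (yV + y'V)) = eV + e'V + (yV + y'V) := by
  rw [map_add, show eV + e'V = vvec 0 from rfl, show yV + y'V = vvec 2 from rfl,
    corr_j 0, corr_j 2, show sigJ 0 = 2 from rfl, show sigJ 2 = 0 from rfl]
  ring

lemma act_j_XZ : act (xa 0) (xV + x'V + (zV + z'V)) = xV + x'V + (zV + z'V) := by
  rw [map_add, show xV + x'V = vvec 1 from rfl, show zV + z'V = vvec 3 from rfl,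
    corr_j 1, corr_j 3, show sigJ 1 = 3 from rfl, show sigJ 3 = 1 from rfl]
  ring

lemma act_k_EZ : act (xa 3) (eV + e'V + (zV + z'V)) = eV + e'V + (zV + z'V) := by
  rw [map_add, show eV + e'V = vvec 0 from rfl, show zV + z'V = vvec 3 from rfl,
    corr_k 0, corr_k 3, show sigK 0 = 3 from rfl, show sigK 3 = 0 from rfl]
  ring

lemma act_k_XY : act (xa 3) (xV + x'V + (yV + y'V)) = xV + x'V + (yV + y'V) := by
  rw [map_add, show xV + x'V = vvec 1 from rfl, show yV + y'V = vvec 2 from rfl,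
    corr_k 1, corr_k 2, show sigK 1 = 2 from rfl, show sigK 2 = 1 from rfl]
  ring

lemma hom1_EX : (eV + e'V + (xV + x'V) : R8).IsHomogeneous 1 :=
  ((gens_hom1 _ (vvec_mem_gens 0)).add (gens_hom1 _ (vvec_mem_gens 1)))

lemma hom1_YZ : (yV + y'V + (zV + z'V) : R8).IsHomogeneous 1 :=
  ((gens_hom1 _ (vvec_mem_gens 2)).add (gens_hom1 _ (vvec_mem_gens 3)))

lemma hom1_EY : (eV + e'V + (yV + y'V) : R8).IsHomogeneous 1 :=
  ((gens_hom1 _ (vvec_mem_gens 0)).add (gens_hom1 _ (vvec_mem_gens 2)))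

lemma hom1_XZ : (xV + x'V + (zV + z'V) : R8).IsHomogeneous 1 :=
  ((gens_hom1 _ (vvec_mem_gens 1)).add (gens_hom1 _ (vvec_mem_gens 3)))

lemma hom1_EZ : (eV + e'V + (zV + z'V) : R8).IsHomogeneous 1 :=
  ((gens_hom1 _ (vvec_mem_gens 0)).add (gens_hom1 _ (vvec_mem_gens 3)))

lemma hom1_XY : (xV + x'V + (yV + y'V) : R8).IsHomogeneous 1 :=
  ((gens_hom1 _ (vvec_mem_gens 1)).add (gens_hom1 _ (vvec_mem_gens 2)))

lemma memA_EX : (eV + e'V + (xV + x'V) : R8) ∈ Asub :=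
  Subalgebra.add_mem _ (gens_mem_Asub _ (vvec_mem_gens 0)) (gens_mem_Asub _ (vvec_mem_gens 1))
lemma memA_YZ : (yV + y'V + (zV + z'V) : R8) ∈ Asub :=
  Subalgebra.add_mem _ (gens_mem_Asub _ (vvec_mem_gens 2)) (gens_mem_Asub _ (vvec_mem_gens 3))
lemma memA_EY : (eV + e'V + (yV + y'V) : R8) ∈ Asub :=
  Subalgebra.add_mem _ (gens_mem_Asub _ (vvec_mem_gens 0)) (gens_mem_Asub _ (vvec_mem_gens 2))
lemma memA_XZ : (xV + x'V + (zV + z'V) : R8) ∈ Asub :=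
  Subalgebra.add_mem _ (gens_mem_Asub _ (vvec_mem_gens 1)) (gens_mem_Asub _ (vvec_mem_gens 3))
lemma memA_EZ : (eV + e'V + (zV + z'V) : R8) ∈ Asub :=
  Subalgebra.add_mem _ (gens_mem_Asub _ (vvec_mem_gens 0)) (gens_mem_Asub _ (vvec_mem_gens 3))
lemma memA_XY : (xV + x'V + (yV + y'V) : R8) ∈ Asub :=
  Subalgebra.add_mem _ (gens_mem_Asub _ (vvec_mem_gens 1)) (gens_mem_Asub _ (vvec_mem_gens 2))

lemma deg2_decomp {gc : Q8} {pi qi V1 V2 : R8} (hstruct : ∃ c1 c2 : ℤ,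
      qi = C c1 * V1 + C c2 * V2)
    (hmem1 : pi * V1 * 1 + act gc (pi * V1 * 1) ∈ Lgrp)
    (hmem2 : pi * V2 * 1 + act gc (pi * V2 * 1) ∈ Lgrp) :
    pi * qi + act gc (pi * qi) ∈ Lgrp := by
  obtain ⟨c1, c2, hq⟩ := hstruct
  have key : pi * qi + act gc (pi * qi)
      = c1 • (pi * V1 * 1 + act gc (pi * V1 * 1))
        + c2 • (pi * V2 * 1 + act gc (pi * V2 * 1)) := by
    rw [hq]
    simp only [smul_eq_C_mul, map_add, map_mul, act_C, map_one]
    ring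
  rw [key]
  exact AddSubgroup.add_mem _ (AddSubgroup.zsmul_mem _ hmem1 c1)
    (AddSubgroup.zsmul_mem _ hmem2 c2)

lemma caseI_term {i : ℕ} (h1 : 1 ≤ i) (h3 : i ≤ 3) {pi qi : R8} (hpi : pi ∈ Asub)
    (hpid : pi.IsHomogeneous i) (hpig : act (a 1) pi = pi)
    (hqid : qi.IsHomogeneous (3 - i)) (hqig : act (a 1) qi = qi)
    (hqi2 : act (a 2) qi = qi) :
    pi * qi + act (xa 0) (pi * qi) ∈ Lgrp := by
  interval_cases i
  · exact oddI_mem ⟨0, by norm_num⟩ (by norm_num) hpi hpid hpig hqig hqi2 hqid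
  · -- i = 2 : qi is homogeneous of degree 1 and invariant
    have hq1 : qi.IsHomogeneous 1 := hqid
    refine deg2_decomp ⟨_, _, orb1_i hq1 hqig⟩ ?_ ?_
    · refine oddI_mem (dw := 3) ⟨1, by norm_num⟩ (by norm_num)
        (Subalgebra.mul_mem _ hpi memA_EX) ?_ ?_ (map_one _) (map_one _) (isHomogeneous_one _ _)
      · exact hpid.mul hom1_EX
      · rw [map_mul, hpig, act_i_EX]
    · refine oddI_mem (dw := 3) ⟨1, by norm_num⟩ (by norm_num)
        (Subalgebra.mul_mem _ hpi memA_YZ) ?_ ?_ (map_one _) (map_one _) (isHomogeneous_one _ _)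
      · exact hpid.mul hom1_YZ
      · rw [map_mul, hpig, act_i_YZ]
  · exact oddI_mem ⟨1, by norm_num⟩ (by norm_num) hpi hpid hpig hqig hqi2 hqid

lemma caseJ_term {i : ℕ} (h1 : 1 ≤ i) (h3 : i ≤ 3) {pi qi : R8} (hpi : pi ∈ Asub)
    (hpid : pi.IsHomogeneous i) (hpig : act (xa 0) pi = pi)
    (hqid : qi.IsHomogeneous (3 - i)) (hqig : act (xa 0) qi = qi)
    (hqi2 : act (a 2) qi = qi) :
    pi * qi + act (a 1) (pi * qi) ∈ Lgrp := by
  interval_cases i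
  · exact oddJ_mem ⟨0, by norm_num⟩ (by norm_num) hpi hpid hpig hqig hqi2 hqid
  · have hq1 : qi.IsHomogeneous 1 := hqid
    refine deg2_decomp ⟨_, _, orb1_j hq1 hqig⟩ ?_ ?_
    · refine oddJ_mem (dw := 3) ⟨1, by norm_num⟩ (by norm_num)
        (Subalgebra.mul_mem _ hpi memA_EY) ?_ ?_ (map_one _) (map_one _) (isHomogeneous_one _ _)
      · exact hpid.mul hom1_EY
      · rw [map_mul, hpig, act_j_EY]
    · refine oddJ_mem (dw := 3) ⟨1, by norm_num⟩ (by norm_num)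
        (Subalgebra.mul_mem _ hpi memA_XZ) ?_ ?_ (map_one _) (map_one _) (isHomogeneous_one _ _)
      · exact hpid.mul hom1_XZ
      · rw [map_mul, hpig, act_j_XZ]
  · exact oddJ_mem ⟨1, by norm_num⟩ (by norm_num) hpi hpid hpig hqig hqi2 hqid

lemma caseK_term {i : ℕ} (h1 : 1 ≤ i) (h3 : i ≤ 3) {pi qi : R8} (hpi : pi ∈ Asub)
    (hpid : pi.IsHomogeneous i) (hpig : act (xa 3) pi = pi)
    (hqid : qi.IsHomogeneous (3 - i)) (hqig : act (xa 3) qi = qi)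
    (hqi2 : act (a 2) qi = qi) :
    pi * qi + act (a 1) (pi * qi) ∈ Lgrp := by
  interval_cases i
  · exact oddK_mem ⟨0, by norm_num⟩ (by norm_num) hpi hpid hpig hqig hqi2 hqid
  · have hq1 : qi.IsHomogeneous 1 := hqid
    refine deg2_decomp ⟨_, _, orb1_k hq1 hqig⟩ ?_ ?_
    · refine oddK_mem (dw := 3) ⟨1, by norm_num⟩ (by norm_num)
        (Subalgebra.mul_mem _ hpi memA_EZ) ?_ ?_ (map_one _) (map_one _) (isHomogeneous_one _ _)
      · exact hpid.mul hom1_EZ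
      · rw [map_mul, hpig, act_k_EZ]
    · refine oddK_mem (dw := 3) ⟨1, by norm_num⟩ (by norm_num)
        (Subalgebra.mul_mem _ hpi memA_XY) ?_ ?_ (map_one _) (map_one _) (isHomogeneous_one _ _)
      · exact hpid.mul hom1_XY
      · rw [map_mul, hpig, act_k_XY]
  · exact oddK_mem ⟨1, by norm_num⟩ (by norm_num) hpi hpid hpig hqig hqi2 hqid

lemma act_i_E : act (a 1) (eV + e'V) = xV + x'V := corr_i 0
lemma act_j_E : act (xa 0) (eV + e'V) = yV + y'V := corr_j 0
lemma act_k_E : act (xa 3) (eV + e'V) = zV + z'V := corr_k 0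

lemma hc3_pair (gc : Q8) (p q : R8) :
    homogeneousComponent 3 (p * q + act gc (p * q))
      = ∑ i ∈ range 4, (homogeneousComponent i p * homogeneousComponent (3-i) q
          + act gc (homogeneousComponent i p * homogeneousComponent (3-i) q)) := by
  rw [map_add, hc_act, hc3_mul, map_sum, ← Finset.sum_add_distrib]

lemma hc0_zero {p : R8} (hcc : constantCoeff p = 0) : homogeneousComponent 0 p = 0 := by
  have hc0 : coeff 0 p = 0 := by rwa [constantCoeff_eq] at hcc
  rw [homogeneousComponent_zero, hc0, map_zero]

lemma case4I {p q : R8} (hp : p ∈ Asub) (hcc : constantCoeff p = 0)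
    (hpfix : act (a 1) p = p) (hqfix : act (a 1) q = q) (hq2 : act (a 2) q = q) :
    homogeneousComponent 3 (p * q + act (xa 0) (p * q)) ∈ Lgrp := by
  rw [hc3_pair]
  apply AddSubgroup.sum_mem
  intro i hi
  rcases Nat.eq_zero_or_pos i with rfl | hipos
  · rw [hc0_zero hcc, zero_mul, map_zero, add_zero]
    exact AddSubgroup.zero_mem _
  · exact caseI_term hipos (by have := Finset.mem_range.1 hi; omega)
      (hc_mem_Asub hp i) (homogeneousComponent_isHomogeneous i p)
      (by rw [← hc_act, hpfix]) (homogeneousComponent_isHomogeneous (3-i) q)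
      (by rw [← hc_act, hqfix]) (by rw [← hc_act, hq2])

lemma case4J {p q : R8} (hp : p ∈ Asub) (hcc : constantCoeff p = 0)
    (hpfix : act (xa 0) p = p) (hqfix : act (xa 0) q = q) (hq2 : act (a 2) q = q) :
    homogeneousComponent 3 (p * q + act (a 1) (p * q)) ∈ Lgrp := by
  rw [hc3_pair]
  apply AddSubgroup.sum_mem
  intro i hi
  rcases Nat.eq_zero_or_pos i with rfl | hipos
  · rw [hc0_zero hcc, zero_mul, map_zero, add_zero]
    exact AddSubgroup.zero_mem _
  · exact caseJ_term hipos (by have := Finset.mem_range.1 hi; omega)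
      (hc_mem_Asub hp i) (homogeneousComponent_isHomogeneous i p)
      (by rw [← hc_act, hpfix]) (homogeneousComponent_isHomogeneous (3-i) q)
      (by rw [← hc_act, hqfix]) (by rw [← hc_act, hq2])

lemma case4K {p q : R8} (hp : p ∈ Asub) (hcc : constantCoeff p = 0)
    (hpfix : act (xa 3) p = p) (hqfix : act (xa 3) q = q) (hq2 : act (a 2) q = q) :
    homogeneousComponent 3 (p * q + act (a 1) (p * q)) ∈ Lgrp := by
  rw [hc3_pair]
  apply AddSubgroup.sum_mem
  intro i hi
  rcases Nat.eq_zero_or_pos i with rfl | hipos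
  · rw [hc0_zero hcc, zero_mul, map_zero, add_zero]
    exact AddSubgroup.zero_mem _
  · exact caseK_term hipos (by have := Finset.mem_range.1 hi; omega)
      (hc_mem_Asub hp i) (homogeneousComponent_isHomogeneous i p)
      (by rw [← hc_act, hpfix]) (homogeneousComponent_isHomogeneous (3-i) q)
      (by rw [← hc_act, hqfix]) (by rw [← hc_act, hq2])

lemma odd8_mem {dw : ℕ} (hodd : Odd dw) (hdw3 : dw ≤ 3) {w q' : R8} (hw : w ∈ Asub)
    (hwd : w.IsHomogeneous dw) (hwf1 : act (a 1) w = w) (hwf2 : act (xa 0) w = w)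
    (hq'1 : act (a 1) q' = q') (hq'j : act (xa 0) q' = q') (hq'k : act (xa 3) q' = q')
    (hq'hom : q'.IsHomogeneous (3 - dw)) :
    w * q' ∈ Lgrp := by
  obtain ⟨r, hrA, hrhom, hsplit⟩ := split4 hodd hw hwd hwf1 hwf2
  have hT : w * q' = T (r * q') := by
    rw [hsplit, T_apply, act_a0, add_mul, add_mul, add_mul,
      show act (a 1) r * q' = act (a 1) (r * q') from by rw [map_mul, hq'1],
      show act (xa 0) r * q' = act (xa 0) (r * q') from by rw [map_mul, hq'j],
      show act (xa 3) r * q' = act (xa 3) (r * q') from by rw [map_mul, hq'k]]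
  rw [hT]
  refine T_mem_of hrA
    (cc_split4 hsplit (cc_hom hwd (by rcases hodd with ⟨k, hk⟩; omega))) ?_ ?_
  · rw [show (a 2 : Q8) = a 1 * a 1 by decide, ← act_act, hq'1, hq'1]
  · have h := hrhom.mul hq'hom
    rwa [show dw + (3 - dw) = 3 by omega] at h

lemma case8_term {i : ℕ} (h1 : 1 ≤ i) (h3 : i ≤ 3) {pi qi : R8} (hpi : pi ∈ Asub)
    (hpid : pi.IsHomogeneous i) (hpig1 : act (a 1) pi = pi) (hpig2 : act (xa 0) pi = pi)
    (hqid : qi.IsHomogeneous (3 - i)) (hqg1 : act (a 1) qi = qi)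
    (hqg2 : act (xa 0) qi = qi) :
    pi * qi ∈ Lgrp := by
  have hpig3 : act (xa 3) pi = pi := by
    rw [show (xa 3 : Q8) = a 1 * xa 0 by decide, ← act_act, hpig2, hpig1]
  have hqg3 : act (xa 3) qi = qi := by
    rw [show (xa 3 : Q8) = a 1 * xa 0 by decide, ← act_act, hqg2, hqg1]
  interval_cases i
  · exact odd8_mem ⟨0, by norm_num⟩ (by norm_num) hpi hpid hpig1 hpig2 hqg1 hqg2 hqg3 hqid
  · -- i = 2
    have hq1 : qi.IsHomogeneous 1 := hqid
    obtain ⟨c, horb⟩ : ∃ c : ℤ, qi = C c * (eV + e'V + (xV + x'V) + (yV + y'V) + (zV + z'V)) :=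
      ⟨_, orb1_full hq1 hqg1 hqg2⟩
    have hT : T (pi * (eV + e'V) * 1)
        = pi * (eV + e'V + (xV + x'V) + (yV + y'V) + (zV + z'V)) := by
      rw [mul_one, T_apply, act_a0, map_mul, map_mul, map_mul, hpig1, hpig2, hpig3,
        act_i_E, act_j_E, act_k_E]
      ring
    have hkey : pi * qi = c • T (pi * (eV + e'V) * 1) := by
      rw [horb, hT, smul_eq_C_mul]
      ring
    rw [hkey]
    refine AddSubgroup.zsmul_mem _ (T_mem_of
      (Subalgebra.mul_mem _ hpi (gens_mem_Asub _ (vvec_mem_gens 0))) ?_ (map_one _) ?_) c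
    · rw [map_mul, cc_hom hpid (by norm_num), zero_mul]
    · have h := (hpid.mul (gens_hom1 _ (vvec_mem_gens 0))).mul (isHomogeneous_one Q8 ℤ)
      exact h
  · exact odd8_mem ⟨1, by norm_num⟩ (by norm_num) hpi hpid hpig1 hpig2 hqg1 hqg2 hqg3 hqid

lemma case8hc {p q : R8} (hp : p ∈ Asub) (hcc : constantCoeff p = 0)
    (hpf1 : act (a 1) p = p) (hpf2 : act (xa 0) p = p)
    (hqf1 : act (a 1) q = q) (hqf2 : act (xa 0) q = q) :
    homogeneousComponent 3 (p * q) ∈ Lgrp := by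
  rw [hc3_mul]
  apply AddSubgroup.sum_mem
  intro i hi
  rcases Nat.eq_zero_or_pos i with rfl | hipos
  · rw [hc0_zero hcc, zero_mul]
    exact AddSubgroup.zero_mem _
  · exact case8_term hipos (by have := Finset.mem_range.1 hi; omega)
      (hc_mem_Asub hp i) (homogeneousComponent_isHomogeneous i p)
      (by rw [← hc_act, hpf1]) (by rw [← hc_act, hpf2])
      (homogeneousComponent_isHomogeneous (3-i) q)
      (by rw [← hc_act, hqf1]) (by rw [← hc_act, hqf2])

lemma main_gen (H : Subgroup Q8) (p q : R8) (hp : p ∈ Asub) (hcc : constantCoeff p = 0)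
    (hpH : ∀ h ∈ H, act h p = p) (hqH : ∀ h ∈ H, act h q = q) :
    homogeneousComponent 3 (ind H (p * q)) ∈ Lgrp := by
  have hu : ∀ h ∈ H, act h (p * q) = p * q := fun h hh => by
    rw [map_mul, hpH h hh, hqH h hh]
  have hkey : Nat.card H • homogeneousComponent 3 (ind H (p * q))
      = homogeneousComponent 3 (Ssum (p * q)) := by
    rw [← map_nsmul, card_smul_ind H (p * q) hu]
  rcases Hcases H with h1 | ⟨h2, ha2⟩ | ⟨h4, ha2, hdisj⟩ | ⟨h8, hall⟩
  · rw [h1, one_smul] at hkey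
    rw [hkey]
    have hS : Ssum (p * q) = T (p * (q + act (a 2) q)) := by
      rw [Ssum_eq, ← map_add, map_mul, Asub_fix_a2 p hp, ← mul_add]
    rw [hS]
    refine ZmainT hp hcc ?_
    rw [map_add, act_act, show (a 2 : Q8) * a 2 = a 0 by decide, act_a0, add_comm]
  · rw [h2] at hkey
    have hS : Ssum (p * q) = T (p * q) + T (p * q) := by
      rw [Ssum_eq, hu (a 2) ha2]
    rw [hS, map_add, ← two_smul ℕ] at hkey
    rw [smul_cancel (by norm_num : (2:ℕ) ≠ 0) hkey]
    exact ZmainT hp hcc (hqH (a 2) ha2)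
  · have ha2q : act (a 2) q = q := hqH _ ha2
    rw [h4] at hkey
    rcases hdisj with hg | hg | hg
    · have ha3 : (a 3 : Q8) ∈ H := by
        rw [show (a 3 : Q8) = a 1 * a 2 by decide]
        exact Subgroup.mul_mem _ hg ha2
      have e1 : act (a 1) (p * q) = p * q := hu _ hg
      have e3 : act (xa 3) (p * q) = act (xa 0) (p * q) := by
        rw [show (xa 3 : Q8) = xa 0 * a 3 by decide, ← act_act, hu _ ha3]
      have hS : Ssum (p * q) = (p * q + act (xa 0) (p * q)) + (p * q + act (xa 0) (p * q))
          + ((p * q + act (xa 0) (p * q)) + (p * q + act (xa 0) (p * q))) := by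
        rw [Ssum_eq, hu (a 2) ha2, T_apply, act_a0, e1, e3]
        ring
      rw [hS] at hkey
      have habel : homogeneousComponent 3 ((p * q + act (xa 0) (p * q)) + (p * q + act (xa 0) (p * q))
            + ((p * q + act (xa 0) (p * q)) + (p * q + act (xa 0) (p * q))))
          = (4:ℕ) • homogeneousComponent 3 (p * q + act (xa 0) (p * q)) := by
        simp only [map_add]
        abel
      rw [habel] at hkey
      rw [smul_cancel (by norm_num : (4:ℕ) ≠ 0) hkey]
      exact case4I hp hcc (hpH _ hg) (hqH _ hg) ha2q
    · have e1 : act (xa 0) (p * q) = p * q := hu _ hg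
      have e3 : act (xa 3) (p * q) = act (a 1) (p * q) := by
        rw [show (xa 3 : Q8) = a 1 * xa 0 by decide, ← act_act, hu _ hg]
      have hS : Ssum (p * q) = (p * q + act (a 1) (p * q)) + (p * q + act (a 1) (p * q))
          + ((p * q + act (a 1) (p * q)) + (p * q + act (a 1) (p * q))) := by
        rw [Ssum_eq, hu (a 2) ha2, T_apply, act_a0, e1, e3]
        ring
      rw [hS] at hkey
      have habel : homogeneousComponent 3 ((p * q + act (a 1) (p * q)) + (p * q + act (a 1) (p * q))
            + ((p * q + act (a 1) (p * q)) + (p * q + act (a 1) (p * q))))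
          = (4:ℕ) • homogeneousComponent 3 (p * q + act (a 1) (p * q)) := by
        simp only [map_add]
        abel
      rw [habel] at hkey
      rw [smul_cancel (by norm_num : (4:ℕ) ≠ 0) hkey]
      exact case4J hp hcc (hpH _ hg) (hqH _ hg) ha2q
    · have hxa1 : (xa 1 : Q8) ∈ H := by
        rw [show (xa 1 : Q8) = xa 3 * a 2 by decide]
        exact Subgroup.mul_mem _ hg ha2
      have e1 : act (xa 3) (p * q) = p * q := hu _ hg
      have e0 : act (xa 0) (p * q) = act (a 1) (p * q) := by
        rw [show (xa 0 : Q8) = a 1 * xa 1 by decide, ← act_act, hu _ hxa1]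
      have hS : Ssum (p * q) = (p * q + act (a 1) (p * q)) + (p * q + act (a 1) (p * q))
          + ((p * q + act (a 1) (p * q)) + (p * q + act (a 1) (p * q))) := by
        rw [Ssum_eq, hu (a 2) ha2, T_apply, act_a0, e1, e0]
        ring
      rw [hS] at hkey
      have habel : homogeneousComponent 3 ((p * q + act (a 1) (p * q)) + (p * q + act (a 1) (p * q))
            + ((p * q + act (a 1) (p * q)) + (p * q + act (a 1) (p * q))))
          = (4:ℕ) • homogeneousComponent 3 (p * q + act (a 1) (p * q)) := by
        simp only [map_add]
        abel
      rw [habel] at hkey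
      rw [smul_cancel (by norm_num : (4:ℕ) ≠ 0) hkey]
      exact case4K hp hcc (hpH _ hg) (hqH _ hg) ha2q
  · rw [h8] at hkey
    have hS : Ssum (p * q) = (8:ℕ) • (p * q) := by
      rw [Ssum, Finset.sum_congr rfl (fun g _ => hu g (hall g)), Finset.sum_const,
        Finset.card_univ, show Fintype.card Q8 = 8 from by rw [QuaternionGroup.card]]
    rw [hS, map_nsmul] at hkey
    rw [smul_cancel (by norm_num : (8:ℕ) ≠ 0) hkey]
    exact case8hc hp hcc (hpH _ (hall _)) (hpH _ (hall _)) (hqH _ (hall _)) (hqH _ (hall _))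
/-- Every homogeneous element of degree `3` of the subgroup `𝓘` lies in
`𝓛`, and conversely `𝓛 ⊆ 𝓘`; in other words, the set of homogeneous degree-3 elements
of `𝓘` coincides with `𝓛`. -/
theorem stmt10 :
    (∀ r ∈ Igrp, r.IsHomogeneous 3 → r ∈ Lgrp) ∧ Lgrp ≤ Igrp := by
  constructor
  · intro r hr hhom
    have main : ∀ s ∈ Igrp, homogeneousComponent 3 s ∈ Lgrp := by
      intro s hs
      induction hs using AddSubgroup.closure_induction with
      | mem x hx =>
          obtain ⟨H, p, q, hpA, hcc, hpH, hqH, rfl⟩ := hx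
          exact main_gen H p q hpA hcc hpH hqH
      | zero =>
          rw [map_zero]
          exact AddSubgroup.zero_mem _
      | add x y hx hy ihx ihy =>
          rw [map_add]
          exact AddSubgroup.add_mem _ ihx ihy
      | neg x hx ihx =>
          rw [map_neg]
          exact AddSubgroup.neg_mem _ ihx
    rw [← hc_self hhom]
    exact main r hr
  · refine (AddSubgroup.closure_le _).2 ?_
    rintro r ⟨v, hv, q, hq2, hq2a, rfl⟩
    apply AddSubgroup.subset_closure
    have hvg : v ∈ gensSet := hv
    have hvq2 : act (a 2) (v * q) = v * q := by
      rw [map_mul, act_a2_gen v hvg, hq2a]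
    have hinv : ∀ h ∈ Subgroup.zpowers (a 2 : Q8), act h (v * q) = v * q :=
      fun h hh => stab_zpowers hvq2 hh
    refine ⟨Subgroup.zpowers (a 2 : Q8), v, q, gens_mem_Asub v hvg,
      cc_hom (gens_hom1 v hvg) one_ne_zero,
      fun h hh => stab_zpowers (act_a2_gen v hvg) hh,
      fun h hh => stab_zpowers hq2a hh, ?_⟩
    have hcard : Nat.card (Subgroup.zpowers (a 2 : Q8)) = 2 := by
      haveI : Fact (Nat.Prime 2) := ⟨by norm_num⟩
      rw [Nat.card_zpowers,
        orderOf_eq_prime (by decide : (a 2 : Q8) ^ 2 = 1) (by decide : (a 2 : Q8) ≠ 1)]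
    have h2 : (2:ℕ) • ind (Subgroup.zpowers (a 2 : Q8)) (v * q) = Ssum (v * q) := by
      have h2a := card_smul_ind (Subgroup.zpowers (a 2 : Q8)) (v * q) hinv
      rwa [hcard] at h2a
    have h2' : (2:ℕ) • (v * q + act (a 1) (v * q) + act (xa 0) (v * q) + act (xa 3) (v * q))
        = Ssum (v * q) := by
      rw [Ssum_eq, hvq2, T_apply, act_a0]
      abel
    exact smul_cancel (by norm_num : (2:ℕ) ≠ 0) (h2'.trans h2.symm)
end

section
/- Let d ∈ {1, 3}. Every homogeneous element of degree d of the subalgebra A that is fixed by the action of every element of Q₈ can be written as u + i·u + j·u + k·u for some homogeneous element u ∈ A of degree d with zero constant term. In particular, the Q₈-invariant homogeneous degree-1 elements of A are exactly the integer multiples of (e+e′) + (x+x′) + (y+y′) + (z+z′). -/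
set_option synthInstance.maxHeartbeats 1000000
set_option maxHeartbeats 1000000

open MvPolynomial QuaternionGroup

abbrev P4 : Type := MvPolynomial (Fin 4) ℤ

def c1 : Equiv.Perm (Fin 4) := Equiv.swap 0 1 * Equiv.swap 2 3
def c2 : Equiv.Perm (Fin 4) := Equiv.swap 0 2 * Equiv.swap 1 3
def c3 : Equiv.Perm (Fin 4) := Equiv.swap 0 3 * Equiv.swap 1 2

-- sum of entries
lemma deg4 (m : Fin 4 →₀ ℕ) : (Finsupp.weight 1) m = m 0 + m 1 + m 2 + m 3 := by
  rw [show (Finsupp.weight 1 : (Fin 4 →₀ ℕ) →+ ℕ) = Finsupp.degree from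
    Finsupp.degree_eq_weight_one.symm, Finsupp.degree_apply]
  rw [Finset.sum_subset (Finset.subset_univ _) (fun i _ hi => Finsupp.notMem_support_iff.mp hi)]
  simp [Fin.sum_univ_four]

lemma free1 (m : Fin 4 →₀ ℕ) (hodd : Odd (m 0 + m 1 + m 2 + m 3)) :
    Finsupp.mapDomain c1 m ≠ m ∧ Finsupp.mapDomain c2 m ≠ m ∧ Finsupp.mapDomain c3 m ≠ m := by
  obtain ⟨t, ht⟩ := hodd
  refine ⟨fun h => ?_, fun h => ?_, fun h => ?_⟩
  · have h0 := DFunLike.congr_fun h (c1 0)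
    have h2 := DFunLike.congr_fun h (c1 2)
    rw [Finsupp.mapDomain_apply c1.injective] at h0 h2
    have e0 : c1 (0:Fin 4) = 1 := by decide
    have e2 : c1 (2:Fin 4) = 3 := by decide
    rw [e0] at h0; rw [e2] at h2; omega
  · have h0 := DFunLike.congr_fun h (c2 0)
    have h2 := DFunLike.congr_fun h (c2 1)
    rw [Finsupp.mapDomain_apply c2.injective] at h0 h2
    have e0 : c2 (0:Fin 4) = 2 := by decide
    have e2 : c2 (1:Fin 4) = 3 := by decide
    rw [e0] at h0; rw [e2] at h2; omega
  · have h0 := DFunLike.congr_fun h (c3 0)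
    have h2 := DFunLike.congr_fun h (c3 1)
    rw [Finsupp.mapDomain_apply c3.injective] at h0 h2
    have e0 : c3 (0:Fin 4) = 3 := by decide
    have e2 : c3 (1:Fin 4) = 2 := by decide
    rw [e0] at h0; rw [e2] at h2; omega

def enc (m : Fin 4 →₀ ℕ) : ℕ := Nat.pair (m 0) (Nat.pair (m 1) (Nat.pair (m 2) (m 3)))

lemma enc_inj : Function.Injective enc := by
  intro m m' h
  simp only [enc, Nat.pair_eq_pair] at h
  ext i; fin_cases i <;> simp [h.1, h.2.1, h.2.2.1, h.2.2.2]

def good (m : Fin 4 →₀ ℕ) : Prop :=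
  enc (Finsupp.mapDomain c1 m) < enc m ∧ enc (Finsupp.mapDomain c2 m) < enc m ∧
    enc (Finsupp.mapDomain c3 m) < enc m

noncomputable instance : DecidablePred good := Classical.decPred _

lemma four_max (e0 e1 e2 e3 : ℕ) (h01 : e0 ≠ e1) (h02 : e0 ≠ e2) (h03 : e0 ≠ e3)
    (h12 : e1 ≠ e2) (h13 : e1 ≠ e3) (h23 : e2 ≠ e3) (c : ℤ) :
    (if e1 < e0 ∧ e2 < e0 ∧ e3 < e0 then c else 0)
      + (if e0 < e1 ∧ e3 < e1 ∧ e2 < e1 then c else 0)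
      + (if e3 < e2 ∧ e0 < e2 ∧ e1 < e2 then c else 0)
      + (if e2 < e3 ∧ e1 < e3 ∧ e0 < e3 then c else 0) = c := by
  split_ifs <;> omega

lemma deg4' (m : Fin 4 →₀ ℕ) : Finsupp.degree m = m 0 + m 1 + m 2 + m 3 := by
  rw [Finsupp.degree_apply]
  rw [Finset.sum_subset (Finset.subset_univ _) (fun i _ hi => Finsupp.notMem_support_iff.mp hi)]
  simp [Fin.sum_univ_four]

lemma mdcomp (b c : Equiv.Perm (Fin 4)) (m : Fin 4 →₀ ℕ) :
    Finsupp.mapDomain ⇑b (Finsupp.mapDomain ⇑c m) = Finsupp.mapDomain ⇑(b * c) m := by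
  rw [← Finsupp.mapDomain_comp, ← Equiv.Perm.coe_mul]

lemma md_one (m : Fin 4 →₀ ℕ) : Finsupp.mapDomain ⇑(1 : Equiv.Perm (Fin 4)) m = m := by
  rw [Equiv.Perm.coe_one, Finsupp.mapDomain_id]

lemma key {d : ℕ} (hd : Odd d) (q : P4) (hq : q.IsHomogeneous d)
    (h1 : rename (⇑c1) q = q) (h2 : rename (⇑c2) q = q) (h3 : rename (⇑c3) q = q) :
    ∃ r : P4, r.IsHomogeneous d ∧
      q = r + rename (⇑c1) r + rename (⇑c2) r + rename (⇑c3) r := by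
  classical
  have cinv : ∀ (c : Equiv.Perm (Fin 4)), rename (⇑c) q = q →
      ∀ m : Fin 4 →₀ ℕ, coeff (Finsupp.mapDomain (⇑c) m) q = coeff m q := by
    intro c hc m
    conv_lhs => rw [← hc]
    exact coeff_rename_mapDomain (⇑c) c.injective q m
  set r : P4 := ∑ m ∈ q.support.filter good, monomial m (coeff m q) with hr
  have hrh : r.IsHomogeneous d := by
    apply IsHomogeneous.sum
    intro m hm
    simp only [Finset.mem_filter, mem_support_iff] at hm
    refine isHomogeneous_monomial _ ?_
    by_contra hne
    exact hm.1 (hq.coeff_eq_zero hne)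
  have coeff_r : ∀ m : Fin 4 →₀ ℕ,
      coeff m r = if coeff m q ≠ 0 ∧ good m then coeff m q else 0 := by
    intro m
    rw [hr, coeff_sum]
    simp only [coeff_monomial]
    rw [Finset.sum_ite_eq' (q.support.filter good) m (fun m' => coeff m' q)]
    simp [Finset.mem_filter, mem_support_iff]
  have coeff_rr : ∀ (c : Equiv.Perm (Fin 4)), c * c = 1 → rename (⇑c) q = q → ∀ m : Fin 4 →₀ ℕ,
      coeff m (rename (⇑c) r) =
        if coeff m q ≠ 0 ∧ good (Finsupp.mapDomain (⇑c) m) then coeff m q else 0 := by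
    intro c hcc hqc m
    rw [hr, map_sum]
    simp only [rename_monomial]
    rw [coeff_sum]
    simp only [coeff_monomial]
    have hiff : ∀ m' : Fin 4 →₀ ℕ, (Finsupp.mapDomain (⇑c) m' = m) ↔
        (m' = Finsupp.mapDomain (⇑c) m) := by
      intro m'
      constructor
      · intro h; rw [← h, mdcomp, hcc, md_one]
      · intro h; rw [h, mdcomp, hcc, md_one]
    simp only [hiff]
    rw [Finset.sum_ite_eq' (q.support.filter good) (Finsupp.mapDomain (⇑c) m)
      (fun m' => coeff m' q)]
    simp [Finset.mem_filter, mem_support_iff, cinv c hqc]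
  refine ⟨r, hrh, ?_⟩
  ext m
  rw [coeff_add, coeff_add, coeff_add, coeff_r,
    coeff_rr c1 (by decide) h1, coeff_rr c2 (by decide) h2, coeff_rr c3 (by decide) h3]
  by_cases h0 : coeff m q = 0
  · simp [h0]
  · simp only [h0, ne_eq, not_false_eq_true, true_and]
    have hdm : Finsupp.degree m = d := by
      by_contra hne; exact h0 (hq.coeff_eq_zero hne)
    have hodd : Odd (m 0 + m 1 + m 2 + m 3) := by rw [← deg4', hdm]; exact hd
    obtain ⟨f1, f2, f3⟩ := free1 m hodd
    have dd : ∀ (b c : Equiv.Perm (Fin 4)), b * b = 1 →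
        (Finsupp.mapDomain ⇑(b * c) m ≠ m) →
        Finsupp.mapDomain ⇑b m ≠ Finsupp.mapDomain ⇑c m := by
      intro b c hbb hne h
      apply hne
      rw [← mdcomp, ← h, mdcomp, hbb, md_one]
    have d01 : enc (Finsupp.mapDomain ⇑c1 m) ≠ enc m := fun h => f1 (enc_inj h)
    have d02 : enc (Finsupp.mapDomain ⇑c2 m) ≠ enc m := fun h => f2 (enc_inj h)
    have d03 : enc (Finsupp.mapDomain ⇑c3 m) ≠ enc m := fun h => f3 (enc_inj h)
    have d12 : enc (Finsupp.mapDomain ⇑c1 m) ≠ enc (Finsupp.mapDomain ⇑c2 m) :=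
      fun h => dd c1 c2 (by decide)
        (by rw [show c1 * c2 = c3 from by decide]; exact f3) (enc_inj h)
    have d13 : enc (Finsupp.mapDomain ⇑c1 m) ≠ enc (Finsupp.mapDomain ⇑c3 m) :=
      fun h => dd c1 c3 (by decide)
        (by rw [show c1 * c3 = c2 from by decide]; exact f2) (enc_inj h)
    have d23 : enc (Finsupp.mapDomain ⇑c2 m) ≠ enc (Finsupp.mapDomain ⇑c3 m) :=
      fun h => dd c2 c3 (by decide)
        (by rw [show c2 * c3 = c1 from by decide]; exact f1) (enc_inj h)
    simp only [good, mdcomp,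
      show c1 * c1 = 1 from by decide, show c2 * c1 = c3 from by decide,
      show c3 * c1 = c2 from by decide, show c1 * c2 = c3 from by decide,
      show c2 * c2 = 1 from by decide, show c3 * c2 = c1 from by decide,
      show c1 * c3 = c2 from by decide, show c2 * c3 = c1 from by decide,
      show c3 * c3 = 1 from by decide, md_one]
    split_ifs <;> omega


noncomputable def gen : Fin 4 → R8 := ![eV + e'V, xV + x'V, yV + y'V, zV + z'V]

noncomputable def Phi : P4 →ₐ[ℤ] R8 := aeval gen

lemma range_gen : Set.range gen = ({eV + e'V, xV + x'V, yV + y'V, zV + z'V} : Set R8) := by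
  ext r
  constructor
  · rintro ⟨i, rfl⟩; fin_cases i <;> simp [gen]
  · intro h
    simp only [Set.mem_insert_iff, Set.mem_singleton_iff] at h
    rcases h with rfl | rfl | rfl | rfl
    exacts [⟨0, rfl⟩, ⟨1, rfl⟩, ⟨2, rfl⟩, ⟨3, rfl⟩]

lemma Asub_eq : Asub = Phi.range := by
  rw [Asub, ← range_gen, Algebra.adjoin_range_eq_range_aeval]
  rfl

lemma gen_homog (i : Fin 4) : (gen i).IsHomogeneous 1 := by
  fin_cases i <;>
    exact (isHomogeneous_X _ _).add (isHomogeneous_X _ _)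

lemma Phi_homog {n : ℕ} {q : P4} (h : q.IsHomogeneous n) : (Phi q).IsHomogeneous n := by
  have hs : Phi q = ∑ m ∈ q.support, Phi (monomial m (coeff m q)) := by
    rw [← map_sum, ← as_sum]
  rw [hs]
  apply IsHomogeneous.sum
  intro m hm
  have hdeg : Finsupp.degree m = n := by
    by_contra hne
    exact (mem_support_iff.mp hm) (h.coeff_eq_zero hne)
  rw [Phi, aeval_monomial]
  have hprod : (Finsupp.prod m fun i k => gen i ^ k).IsHomogeneous n := by
    rw [Finsupp.prod, ← hdeg, Finsupp.degree]
    exact IsHomogeneous.prod _ _ _ (fun i _ => by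
      simpa using (gen_homog i).pow (m i))
  have : (algebraMap ℤ R8) (coeff m q) = C (coeff m q) := rfl
  rw [this]
  exact hprod.C_mul _

noncomputable def psiv : Q8 → P4 := fun g =>
  if g = a 0 then X 0 else if g = a 1 then X 1 else if g = xa 0 then X 2
    else if g = xa 3 then X 3 else 0

noncomputable def Psi : R8 →ₐ[ℤ] P4 := aeval psiv

lemma psiv_a0 : psiv (a 0) = X 0 := if_pos rfl
lemma psiv_a1 : psiv (a 1) = X 1 := by
  rw [psiv]; rw [if_neg (by decide), if_pos rfl]
lemma psiv_xa0 : psiv (xa 0) = X 2 := by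
  rw [psiv]; rw [if_neg (by decide), if_neg (by decide), if_pos rfl]
lemma psiv_xa3 : psiv (xa 3) = X 3 := by
  rw [psiv]
  rw [if_neg (by decide), if_neg (by decide), if_neg (by decide), if_pos rfl]
lemma psiv_a2 : psiv (a 2) = 0 := by
  rw [psiv]
  rw [if_neg (by decide), if_neg (by decide), if_neg (by decide), if_neg (by decide)]
lemma psiv_a3 : psiv (a 3) = 0 := by
  rw [psiv]
  rw [if_neg (by decide), if_neg (by decide), if_neg (by decide), if_neg (by decide)]
lemma psiv_xa1 : psiv (xa 1) = 0 := by
  rw [psiv]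
  rw [if_neg (by decide), if_neg (by decide), if_neg (by decide), if_neg (by decide)]
lemma psiv_xa2 : psiv (xa 2) = 0 := by
  rw [psiv]
  rw [if_neg (by decide), if_neg (by decide), if_neg (by decide), if_neg (by decide)]

lemma PsiPhi (q : P4) : Psi (Phi q) = q := by
  have h : Psi.comp Phi = AlgHom.id ℤ P4 := by
    apply MvPolynomial.algHom_ext
    intro i
    have h0 : Psi (Phi (X (0 : Fin 4))) = X 0 := by
      rw [Phi, aeval_X]
      show Psi (eV + e'V) = X 0
      rw [eV, e'V, map_add, Psi, aeval_X, aeval_X, psiv_a0, psiv_a2, add_zero]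
    have h1 : Psi (Phi (X (1 : Fin 4))) = X 1 := by
      rw [Phi, aeval_X]
      show Psi (xV + x'V) = X 1
      rw [xV, x'V, map_add, Psi, aeval_X, aeval_X, psiv_a1, psiv_a3, add_zero]
    have h2 : Psi (Phi (X (2 : Fin 4))) = X 2 := by
      rw [Phi, aeval_X]
      show Psi (yV + y'V) = X 2
      rw [yV, y'V, map_add, Psi, aeval_X, aeval_X, psiv_xa0, psiv_xa2, add_zero]
    have h3 : Psi (Phi (X (3 : Fin 4))) = X 3 := by
      rw [Phi, aeval_X]
      show Psi (zV + z'V) = X 3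
      rw [zV, z'V, map_add, Psi, aeval_X, aeval_X, psiv_xa3, psiv_xa1, add_zero]
    fin_cases i
    exacts [h0, h1, h2, h3]
  exact DFunLike.congr_fun h q

lemma Phi_inj : Function.Injective Phi := fun p q h => by
  rw [← PsiPhi p, ← PsiPhi q, h]

lemma act_gen1 (i : Fin 4) : act (a 1) (gen i) = gen (c1 i) := by
  fin_cases i
  · show act (a 1) (gen 0) = gen (c1 0)
    rw [show c1 (0 : Fin 4) = 1 from by decide]
    show act (a 1) (eV + e'V) = xV + x'V
    simp only [act, map_add, rename_X, e'V, eV, x'V, xV]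
    rw [show (a 1 * a 0 : Q8) = a 1 from by decide,
      show (a 1 * a 2 : Q8) = a 3 from by decide] <;> rw [add_comm]
  · show act (a 1) (gen 1) = gen (c1 1)
    rw [show c1 (1 : Fin 4) = 0 from by decide]
    show act (a 1) (xV + x'V) = eV + e'V
    simp only [act, map_add, rename_X, e'V, eV, x'V, xV]
    rw [show (a 1 * a 1 : Q8) = a 2 from by decide,
      show (a 1 * a 3 : Q8) = a 0 from by decide] <;> rw [add_comm]
  · show act (a 1) (gen 2) = gen (c1 2)
    rw [show c1 (2 : Fin 4) = 3 from by decide]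
    show act (a 1) (yV + y'V) = zV + z'V
    simp only [act, map_add, rename_X, y'V, yV, z'V, zV]
    rw [show (a 1 * xa 0 : Q8) = xa 3 from by decide,
      show (a 1 * xa 2 : Q8) = xa 1 from by decide] <;> rw [add_comm]
  · show act (a 1) (gen 3) = gen (c1 3)
    rw [show c1 (3 : Fin 4) = 2 from by decide]
    show act (a 1) (zV + z'V) = yV + y'V
    simp only [act, map_add, rename_X, y'V, yV, z'V, zV]
    rw [show (a 1 * xa 3 : Q8) = xa 2 from by decide,
      show (a 1 * xa 1 : Q8) = xa 0 from by decide] <;> rw [add_comm]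

lemma act_gen2 (i : Fin 4) : act (xa 0) (gen i) = gen (c2 i) := by
  fin_cases i
  · show act (xa 0) (gen 0) = gen (c2 0)
    rw [show c2 (0 : Fin 4) = 2 from by decide]
    show act (xa 0) (eV + e'V) = yV + y'V
    simp only [act, map_add, rename_X, e'V, eV, y'V, yV]
    rw [show (xa 0 * a 0 : Q8) = xa 0 from by decide,
      show (xa 0 * a 2 : Q8) = xa 2 from by decide] <;> rw [add_comm]
  · show act (xa 0) (gen 1) = gen (c2 1)
    rw [show c2 (1 : Fin 4) = 3 from by decide]
    show act (xa 0) (xV + x'V) = zV + z'V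
    simp only [act, map_add, rename_X, x'V, xV, z'V, zV]
    rw [show (xa 0 * a 1 : Q8) = xa 1 from by decide,
      show (xa 0 * a 3 : Q8) = xa 3 from by decide] <;> rw [add_comm]
  · show act (xa 0) (gen 2) = gen (c2 2)
    rw [show c2 (2 : Fin 4) = 0 from by decide]
    show act (xa 0) (yV + y'V) = eV + e'V
    simp only [act, map_add, rename_X, e'V, eV, y'V, yV]
    rw [show (xa 0 * xa 0 : Q8) = a 2 from by decide,
      show (xa 0 * xa 2 : Q8) = a 0 from by decide] <;> rw [add_comm]
  · show act (xa 0) (gen 3) = gen (c2 3)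
    rw [show c2 (3 : Fin 4) = 1 from by decide]
    show act (xa 0) (zV + z'V) = xV + x'V
    simp only [act, map_add, rename_X, x'V, xV, z'V, zV]
    rw [show (xa 0 * xa 3 : Q8) = a 1 from by decide,
      show (xa 0 * xa 1 : Q8) = a 3 from by decide] <;> rw [add_comm]

lemma act_gen3 (i : Fin 4) : act (xa 3) (gen i) = gen (c3 i) := by
  fin_cases i
  · show act (xa 3) (gen 0) = gen (c3 0)
    rw [show c3 (0 : Fin 4) = 3 from by decide]
    show act (xa 3) (eV + e'V) = zV + z'V
    simp only [act, map_add, rename_X, e'V, eV, z'V, zV]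
    rw [show (xa 3 * a 0 : Q8) = xa 3 from by decide,
      show (xa 3 * a 2 : Q8) = xa 1 from by decide] <;> rw [add_comm]
  · show act (xa 3) (gen 1) = gen (c3 1)
    rw [show c3 (1 : Fin 4) = 2 from by decide]
    show act (xa 3) (xV + x'V) = yV + y'V
    simp only [act, map_add, rename_X, x'V, xV, y'V, yV]
    rw [show (xa 3 * a 1 : Q8) = xa 0 from by decide,
      show (xa 3 * a 3 : Q8) = xa 2 from by decide] <;> rw [add_comm]
  · show act (xa 3) (gen 2) = gen (c3 2)
    rw [show c3 (2 : Fin 4) = 1 from by decide]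
    show act (xa 3) (yV + y'V) = xV + x'V
    simp only [act, map_add, rename_X, x'V, xV, y'V, yV]
    rw [show (xa 3 * xa 0 : Q8) = a 3 from by decide,
      show (xa 3 * xa 2 : Q8) = a 1 from by decide] <;> rw [add_comm]
  · show act (xa 3) (gen 3) = gen (c3 3)
    rw [show c3 (3 : Fin 4) = 0 from by decide]
    show act (xa 3) (zV + z'V) = eV + e'V
    simp only [act, map_add, rename_X, e'V, eV, z'V, zV]
    rw [show (xa 3 * xa 3 : Q8) = a 2 from by decide,
      show (xa 3 * xa 1 : Q8) = a 0 from by decide] <;> rw [add_comm]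

lemma actPhi (g : Q8) (c : Equiv.Perm (Fin 4)) (hg : ∀ i, act g (gen i) = gen (c i))
    (q : P4) : act g (Phi q) = Phi (rename (⇑c) q) := by
  have h : (act g).comp Phi = Phi.comp (rename (⇑c)) := by
    apply MvPolynomial.algHom_ext
    intro i
    simp only [AlgHom.comp_apply, Phi, aeval_X, rename_X, hg i]
  exact DFunLike.congr_fun h q

noncomputable def SQ : R8 := ∑ h : Q8, X h

lemma S_eq : (eV + e'V) + (xV + x'V) + (yV + y'V) + (zV + z'V) = SQ := by
  rw [SQ, show (Finset.univ : Finset Q8)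
      = {a 0, a 1, a 2, a 3, xa 0, xa 1, xa 2, xa 3} from by decide]
  rw [Finset.sum_insert (by decide), Finset.sum_insert (by decide),
    Finset.sum_insert (by decide), Finset.sum_insert (by decide),
    Finset.sum_insert (by decide), Finset.sum_insert (by decide),
    Finset.sum_insert (by decide), Finset.sum_singleton]
  simp only [eV, e'V, xV, x'V, yV, y'V, zV, z'V]
  ring

lemma act_SQ (g : Q8) : act g SQ = SQ := by
  rw [SQ, map_sum]
  simp only [act, rename_X]
  exact Fintype.sum_equiv (Equiv.mulLeft g) _ _ (fun h => rfl)

lemma single_of_degree_one {σ : Type*} (m : σ →₀ ℕ) (h : Finsupp.degree m = 1) :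
    ∃ i, m = Finsupp.single i 1 := by
  classical
  have hne : m.support.Nonempty := by
    rcases Finset.eq_empty_or_nonempty m.support with he | h'
    · rw [Finsupp.degree_apply, he] at h; simp at h
    · exact h'
  obtain ⟨i, hi⟩ := hne
  refine ⟨i, ?_⟩
  have hsum := h
  rw [Finsupp.degree_apply, ← Finset.add_sum_erase _ _ hi] at hsum
  have himem : m i ≠ 0 := Finsupp.mem_support_iff.mp hi
  have h1 : m i = 1 := by omega
  have h2 : ∑ j ∈ m.support.erase i, m j = 0 := by omega
  ext j
  by_cases hj : j = i
  · subst hj; simp [h1]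
  · have hz : m j = 0 := by
      by_contra hm
      have hjs : j ∈ m.support.erase i :=
        Finset.mem_erase.mpr ⟨hj, Finsupp.mem_support_iff.mpr hm⟩
      have := Finset.sum_eq_zero_iff.mp h2 j hjs
      exact hm this
    simp [hz, Finsupp.single_eq_of_ne' (Ne.symm hj)]

lemma homog1_form (q : P4) (h : q.IsHomogeneous 1) :
    q = ∑ i : Fin 4, C (coeff (Finsupp.single i 1) q) * X i := by
  ext m
  rw [coeff_sum]
  simp only [coeff_C_mul, coeff_X', mul_ite, mul_one, mul_zero]
  by_cases hs : ∃ j : Fin 4, Finsupp.single j 1 = m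
  · obtain ⟨j, rfl⟩ := hs
    rw [Finset.sum_eq_single_of_mem j (Finset.mem_univ j)
      (fun i _ hij => if_neg (fun h => hij ((Finsupp.single_left_inj one_ne_zero).mp h))),
      if_pos rfl]
  · have hz : coeff m q = 0 := by
      apply h.coeff_eq_zero
      intro hdeg
      exact hs (by
        obtain ⟨i, hi⟩ := single_of_degree_one m hdeg
        exact ⟨i, hi.symm⟩)
    rw [hz]
    exact (Finset.sum_eq_zero (fun i _ => if_neg (fun hc => hs ⟨i, hc⟩))).symm

lemma extract (d : ℕ) (p : R8) (hp : p ∈ Asub) (hh : p.IsHomogeneous d) :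
    ∃ q : P4, q.IsHomogeneous d ∧ Phi q = p := by
  rw [Asub_eq] at hp
  obtain ⟨q0, hq0'⟩ := hp
  have hq0 : Phi q0 = p := hq0'
  refine ⟨homogeneousComponent d q0, homogeneousComponent_isHomogeneous d q0, ?_⟩
  have hmem : ∀ i, Phi (homogeneousComponent i q0) ∈ homogeneousSubmodule Q8 ℤ i :=
    fun i => (mem_homogeneousSubmodule _ _).mpr
      (Phi_homog (homogeneousComponent_isHomogeneous i q0))
  have h1 : p = ∑ i ∈ Finset.range (q0.totalDegree + 1),
      Phi (homogeneousComponent i q0) := by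
    rw [← map_sum, sum_homogeneousComponent, hq0]
  have h2 : homogeneousComponent d p = p := by
    rw [homogeneousComponent_of_mem ((mem_homogeneousSubmodule _ _).mpr hh), if_pos rfl]
  have h3 : homogeneousComponent d p
      = if d ∈ Finset.range (q0.totalDegree + 1)
          then Phi (homogeneousComponent d q0) else 0 := by
    rw [h1, map_sum,
      Finset.sum_congr rfl (fun i _ => homogeneousComponent_of_mem (hmem i))]
    exact Finset.sum_ite_eq _ d _
  by_cases hd : d ∈ Finset.range (q0.totalDegree + 1)
  · rw [← h2, h3, if_pos hd]
  · rw [homogeneousComponent_eq_zero _ _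
      (show q0.totalDegree < d by simp only [Finset.mem_range] at hd; omega), map_zero]
    rw [← h2, h3, if_neg hd]

lemma inv_transfer (p : R8) (q : P4) (hΦ : Phi q = p) (g : Q8) (c : Equiv.Perm (Fin 4))
    (hg : ∀ i, act g (gen i) = gen (c i)) (hinv : act g p = p) :
    rename (⇑c) q = q := by
  apply Phi_inj
  rw [← actPhi g c hg, hΦ, hinv]

/-- Let `d ∈ {1, 3}`.  Every homogeneous element of degree `d` of the
subalgebra `A` that is fixed by the action of every element of `Q₈` can be written as
`u + i·u + j·u + k·u` for some homogeneous element `u ∈ A` of degree `d` with zero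
constant term.  In particular, the `Q₈`-invariant homogeneous degree-1 elements of `A`
are exactly the integer multiples of `(e+e′) + (x+x′) + (y+y′) + (z+z′)`. -/
theorem stmt11 :
    (∀ d : ℕ, d = 1 ∨ d = 3 →
      ∀ p ∈ Asub, p.IsHomogeneous d → (∀ g : Q8, act g p = p) →
        ∃ u ∈ Asub, u.IsHomogeneous d ∧ MvPolynomial.constantCoeff u = 0 ∧
          p = u + act (a 1) u + act (xa 0) u + act (xa 3) u) ∧
    (∀ p : R8,
      (p ∈ Asub ∧ p.IsHomogeneous 1 ∧ ∀ g : Q8, act g p = p) ↔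
        ∃ c : ℤ, p = c • ((eV + e'V) + (xV + x'V) + (yV + y'V) + (zV + z'V))) := by
  constructor
  · intro d hd p hp hh hinv
    have hodd : Odd d := by
      rcases hd with rfl | rfl
      · exact ⟨0, by norm_num⟩
      · exact ⟨1, by norm_num⟩
    obtain ⟨q, hq, hPh⟩ := extract d p hp hh
    have i1 : rename (⇑c1) q = q := inv_transfer p q hPh (a 1) c1 act_gen1 (hinv (a 1))
    have i2 : rename (⇑c2) q = q := inv_transfer p q hPh (xa 0) c2 act_gen2 (hinv (xa 0))
    have i3 : rename (⇑c3) q = q := inv_transfer p q hPh (xa 3) c3 act_gen3 (hinv (xa 3))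
    obtain ⟨r, hrh, hqr⟩ := key hodd q hq i1 i2 i3
    refine ⟨Phi r, ?_, Phi_homog hrh, ?_, ?_⟩
    · rw [Asub_eq]; exact ⟨r, rfl⟩
    · have h0 : Finsupp.degree (0 : Q8 →₀ ℕ) ≠ d := by
        rw [Finsupp.degree]
        rcases hd with rfl | rfl <;> simp
      rw [constantCoeff_eq]
      exact (Phi_homog hrh).coeff_eq_zero h0
    · rw [actPhi (a 1) c1 act_gen1, actPhi (xa 0) c2 act_gen2, actPhi (xa 3) c3 act_gen3,
        ← map_add, ← map_add, ← map_add, ← hqr, hPh]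
  · intro p
    constructor
    · rintro ⟨hp, hh, hinv⟩
      obtain ⟨q, hq, hPh⟩ := extract 1 p hp hh
      have i1 : rename (⇑c1) q = q := inv_transfer p q hPh (a 1) c1 act_gen1 (hinv (a 1))
      have i2 : rename (⇑c2) q = q := inv_transfer p q hPh (xa 0) c2 act_gen2 (hinv (xa 0))
      have i3 : rename (⇑c3) q = q := inv_transfer p q hPh (xa 3) c3 act_gen3 (hinv (xa 3))
      have cinv : ∀ (c : Equiv.Perm (Fin 4)), rename (⇑c) q = q → ∀ i : Fin 4,
          coeff (Finsupp.single (c i) 1) q = coeff (Finsupp.single i 1) q := by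
        intro c hc i
        conv_lhs => rw [← hc]
        rw [← Finsupp.mapDomain_single (f := ⇑c)]
        exact coeff_rename_mapDomain (⇑c) c.injective q _
      set c0 := coeff (Finsupp.single (0 : Fin 4) 1) q with hc0
      have e1 : coeff (Finsupp.single (1 : Fin 4) 1) q = c0 := by
        have h := cinv c1 i1 0
        rwa [show c1 (0 : Fin 4) = 1 from by decide] at h
      have e2 : coeff (Finsupp.single (2 : Fin 4) 1) q = c0 := by
        have h := cinv c2 i2 0
        rwa [show c2 (0 : Fin 4) = 2 from by decide] at h
      have e3 : coeff (Finsupp.single (3 : Fin 4) 1) q = c0 := by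
        have h := cinv c3 i3 0
        rwa [show c3 (0 : Fin 4) = 3 from by decide] at h
      have hqform : q = C c0 * (X 0 + X 1 + X 2 + X 3) := by
        conv_lhs => rw [homog1_form q hq]
        rw [Fin.sum_univ_four, e1, e2, e3, ← hc0]
        ring
      refine ⟨c0, ?_⟩
      rw [← hPh, hqform, map_mul, map_add, map_add, map_add]
      rw [show Phi (X (0 : Fin 4)) = eV + e'V from by rw [Phi, aeval_X]; rfl,
        show Phi (X (1 : Fin 4)) = xV + x'V from by rw [Phi, aeval_X]; rfl,
        show Phi (X (2 : Fin 4)) = yV + y'V from by rw [Phi, aeval_X]; rfl,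
        show Phi (X (3 : Fin 4)) = zV + z'V from by rw [Phi, aeval_X]; rfl,
        show Phi (C c0) = (C c0 : R8) from by rw [Phi, aeval_C]; rfl,
        MvPolynomial.smul_eq_C_mul]
    · rintro ⟨c, rfl⟩
      have h1 : eV + e'V ∈ Asub := Algebra.subset_adjoin (Set.mem_insert _ _)
      have h2 : xV + x'V ∈ Asub :=
        Algebra.subset_adjoin (Set.mem_insert_of_mem _ (Set.mem_insert _ _))
      have h3 : yV + y'V ∈ Asub :=
        Algebra.subset_adjoin
          (Set.mem_insert_of_mem _ (Set.mem_insert_of_mem _ (Set.mem_insert _ _)))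
      have h4 : zV + z'V ∈ Asub :=
        Algebra.subset_adjoin
          (Set.mem_insert_of_mem _ (Set.mem_insert_of_mem _
            (Set.mem_insert_of_mem _ rfl)))
      refine ⟨Subalgebra.smul_mem _ (add_mem (add_mem (add_mem h1 h2) h3) h4) c, ?_, ?_⟩
      · rw [MvPolynomial.smul_eq_C_mul]
        have hhom : ((eV + e'V) + (xV + x'V) + (yV + y'V) + (zV + z'V)).IsHomogeneous 1 := by
          simp only [eV, e'V, xV, x'V, yV, y'V, zV, z'V]
          refine IsHomogeneous.add (IsHomogeneous.add (IsHomogeneous.add ?_ ?_) ?_) ?_ <;>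
            exact (isHomogeneous_X _ _).add (isHomogeneous_X _ _)
        exact hhom.C_mul c
      · intro g
        rw [MvPolynomial.smul_eq_C_mul, S_eq, map_mul, act_SQ g,
          show act g (C c) = (C c : R8) from by rw [act, rename_C]]
end
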